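/- arXiv:1604.04973 — 5 statements merged into one kernel-verified Lean document; each statement's English description precedes it below -/
import Mathlib

section
/- For a finite group G, the subgroup commutativity degree satisfies sd(G) = (1/|L(G)|^2) · Σ_{H ≤ G} F₂(H), where L(G) is the subgroup lattice of G, F₂(H) is the number of ordered pairs (A,B) of subgroups of H with AB = H, and sd(G) = |{(A,B) : A,B ≤ G, AB = BA}| / |L(G)|². -/
open scoped Classical Pointwise

/-- The factorization number: number of ordered pairs `(A, B)` of subgroups of `G`
with `A * B = G` as a set. -/
noncomputable def F2 (G : Type*) [Group G] : ℕ :=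
  Nat.card {x : Subgroup G × Subgroup G // (x.1 : Set G) * (x.2 : Set G) = Set.univ}

/-- The subgroup commutativity degree of `G`. -/
noncomputable def sd (G : Type*) [Group G] : ℚ :=
  (Nat.card {x : Subgroup G × Subgroup G //
      (x.1 : Set G) * (x.2 : Set G) = (x.2 : Set G) * (x.1 : Set G)} : ℚ) /
    (Nat.card (Subgroup G) : ℚ) ^ 2

section aux

variable {G : Type*} [Group G]

lemma univ_mul_comm {K : Type*} [Group K] {A B : Subgroup K}
    (h : (A : Set K) * (B : Set K) = Set.univ) :
    (B : Set K) * (A : Set K) = Set.univ := by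
  ext z
  simp only [Set.mem_univ, iff_true]
  have : z⁻¹ ∈ (A : Set K) * (B : Set K) := by rw [h]; trivial
  obtain ⟨a, ha, b, hb, hab⟩ := this
  refine ⟨b⁻¹, B.inv_mem hb, a⁻¹, A.inv_mem ha, ?_⟩
  have hab' : a * b = z⁻¹ := hab
  have : (a * b)⁻¹ = z := by rw [hab', inv_inv]
  rw [← this, mul_inv_rev]

/-- The subgroup with carrier `A * B`, when `A` and `B` permute. -/
def mulSubgroup (A B : Subgroup G) (h : (A : Set G) * (B : Set G) = (B : Set G) * (A : Set G)) :
    Subgroup G where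
  carrier := (A : Set G) * (B : Set G)
  one_mem' := ⟨1, A.one_mem, 1, B.one_mem, mul_one 1⟩
  mul_mem' := by
    rintro x y ⟨a₁, ha₁, b₁, hb₁, rfl⟩ ⟨a₂, ha₂, b₂, hb₂, rfl⟩
    have hba : (b₁ : G) * a₂ ∈ (B : Set G) * (A : Set G) := ⟨b₁, hb₁, a₂, ha₂, rfl⟩
    rw [← h] at hba
    obtain ⟨a₃, ha₃, b₃, hb₃, hab⟩ := hba
    have hab' : a₃ * b₃ = b₁ * a₂ := hab
    refine ⟨a₁ * a₃, A.mul_mem ha₁ ha₃, b₃ * b₂, B.mul_mem hb₃ hb₂, ?_⟩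
    show (a₁ * a₃) * (b₃ * b₂) = (a₁ * b₁) * (a₂ * b₂)
    rw [show (a₁ * b₁) * (a₂ * b₂) = a₁ * ((b₁ * a₂) * b₂) by group, ← hab']
    group
  inv_mem' := by
    rintro x ⟨a, ha, b, hb, rfl⟩
    have : ((a : G) * b)⁻¹ ∈ (B : Set G) * (A : Set G) :=
      ⟨b⁻¹, B.inv_mem hb, a⁻¹, A.inv_mem ha, (mul_inv_rev a b).symm⟩
    rwa [← h] at this

lemma left_le_mulSubgroup (A B : Subgroup G)
    (h : (A : Set G) * (B : Set G) = (B : Set G) * (A : Set G)) : A ≤ mulSubgroup A B h :=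
  fun a ha => ⟨a, ha, 1, B.one_mem, mul_one a⟩

lemma right_le_mulSubgroup (A B : Subgroup G)
    (h : (A : Set G) * (B : Set G) = (B : Set G) * (A : Set G)) : B ≤ mulSubgroup A B h :=
  fun b hb => ⟨1, A.one_mem, b, hb, one_mul b⟩

lemma coe_mul_map (H : Subgroup G) (A B : Subgroup H)
    (h : (A : Set H) * (B : Set H) = Set.univ) :
    (↑(A.map H.subtype) : Set G) * ↑(B.map H.subtype) = (H : Set G) := by
  rw [Subgroup.coe_map, Subgroup.coe_map, ← Set.image_mul, h]
  exact Subtype.coe_image_univ _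

/-- The map from factorization data to permuting pairs. -/
noncomputable def keyFun (G : Type*) [Group G] :
    (Σ H : Subgroup G, {x : Subgroup H × Subgroup H //
      (x.1 : Set H) * (x.2 : Set H) = Set.univ}) →
    {x : Subgroup G × Subgroup G //
      (x.1 : Set G) * (x.2 : Set G) = (x.2 : Set G) * (x.1 : Set G)} :=
  fun y => ⟨(y.2.1.1.map y.1.subtype, y.2.1.2.map y.1.subtype), by
    obtain ⟨H, ⟨⟨A, B⟩, h⟩⟩ := y
    dsimp only
    rw [coe_mul_map H A B h, coe_mul_map H B A (univ_mul_comm h)]⟩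

lemma keyFun_bijective (G : Type*) [Group G] : Function.Bijective (keyFun G) := by
  constructor
  · rintro ⟨H₁, ⟨⟨A₁, B₁⟩, h₁⟩⟩ ⟨H₂, ⟨⟨A₂, B₂⟩, h₂⟩⟩ hEq
    have hEq' := congrArg (fun z => z.1) hEq
    have hA : A₁.map H₁.subtype = A₂.map H₂.subtype := congrArg Prod.fst hEq'
    have hB : B₁.map H₁.subtype = B₂.map H₂.subtype := congrArg Prod.snd hEq'
    have hH : H₁ = H₂ := by
      apply SetLike.coe_injective
      rw [← coe_mul_map H₁ A₁ B₁ h₁, ← coe_mul_map H₂ A₂ B₂ h₂, hA, hB]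
    subst hH
    have hA' : A₁ = A₂ :=
      Subgroup.map_injective H₁.subtype_injective hA
    have hB' : B₁ = B₂ :=
      Subgroup.map_injective H₁.subtype_injective hB
    subst hA'; subst hB'
    rfl
  · rintro ⟨⟨A, B⟩, h⟩
    refine ⟨⟨mulSubgroup A B h, ⟨(A.subgroupOf _, B.subgroupOf _), ?_⟩⟩, ?_⟩
    · ext z
      simp only [Set.mem_univ, iff_true]
      obtain ⟨a, ha, b, hb, hab⟩ := z.2
      exact ⟨⟨a, left_le_mulSubgroup A B h ha⟩, ha, ⟨b, right_le_mulSubgroup A B h hb⟩, hb,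
        Subtype.ext hab⟩
    · apply Subtype.ext
      apply Prod.ext
      · exact (Subgroup.subgroupOf_map_subtype A _).trans
          (inf_eq_left.mpr (left_le_mulSubgroup A B h))
      · exact (Subgroup.subgroupOf_map_subtype B _).trans
          (inf_eq_left.mpr (right_le_mulSubgroup A B h))

end aux

theorem sd_eq_sum_F2 (G : Type*) [Group G] [Fintype G] :
    sd G = (1 / (Nat.card (Subgroup G) : ℚ) ^ 2) * ∑ H : Subgroup G, (F2 H : ℚ) := by
  have hcard : (Nat.card {x : Subgroup G × Subgroup G //
      (x.1 : Set G) * (x.2 : Set G) = (x.2 : Set G) * (x.1 : Set G)} : ℚ) =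
      ∑ H : Subgroup G, (F2 H : ℚ) := by
    rw [← Nat.card_congr (Equiv.ofBijective _ (keyFun_bijective G))]
    have : Nat.card (Σ H : Subgroup G, {x : Subgroup H × Subgroup H //
        (x.1 : Set H) * (x.2 : Set H) = Set.univ}) =
        ∑ H : Subgroup G, F2 H := by
      simp only [F2]
      simp_rw [Nat.card_eq_fintype_card]
      rw [Fintype.card_sigma]
    rw [this]
    push_cast
    rfl
  rw [sd, hcard, div_eq_mul_inv, one_div, mul_comm]
end

section
/- Let G be a finite p-group of order pⁿ. If μ(1,G) ≠ 0 (Möbius function of the subgroup lattice from the trivial subgroup to G), then G is elementary abelian. -/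
open scoped Classical

/-- `μ` is the Möbius function `H ↦ μ(H, G)` of the subgroup lattice of `G`:
it is characterized by `∑_{H ≤ L ≤ G} μ(L, G) = δ_{H,G}`. -/
def IsMobius {G : Type*} [Group G] [Fintype G] (μ : Subgroup G → ℤ) : Prop :=
  ∀ H : Subgroup G,
    ∑ L ∈ Finset.univ.filter (fun L : Subgroup G => H ≤ L), μ L =
      if H = (⊤ : Subgroup G) then 1 else 0

/-- Key lemma: the Möbius function vanishes on subgroups not containing the
Frattini subgroup. -/
lemma mu_eq_zero_of_not_frattini_le {G : Type*} [Group G] [Fintype G]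
    (μ : Subgroup G → ℤ) (hμ : IsMobius μ) :
    ∀ H : Subgroup G, ¬ frattini G ≤ H → μ H = 0 := by
  intro H
  refine IsWellFounded.induction (α := Subgroup G)
    (motive := fun H => ¬ frattini G ≤ H → μ H = 0) (· > ·) H ?_
  intro H IH hH
  have hHtop : H ≠ ⊤ := fun e => hH (e ▸ le_top)
  have hsup : H ⊔ frattini G ≠ ⊤ := by
    intro e
    exact hH ((frattini_nongenerating e) ▸ le_top)
  have h1 := hμ H
  rw [if_neg hHtop,
    ← Finset.sum_filter_add_sum_filter_not
      (Finset.univ.filter (fun L : Subgroup G => H ≤ L))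
      (fun L => frattini G ≤ L)] at h1
  have e1 : (Finset.univ.filter (fun L : Subgroup G => H ≤ L)).filter
      (fun L => frattini G ≤ L)
      = Finset.univ.filter (fun L : Subgroup G => H ⊔ frattini G ≤ L) := by
    ext L
    simp [Finset.mem_filter, sup_le_iff]
  have h2 : (∑ L ∈ (Finset.univ.filter (fun L : Subgroup G => H ≤ L)).filter
      (fun L => frattini G ≤ L), μ L) = 0 := by
    rw [e1]
    have := hμ (H ⊔ frattini G)
    rwa [if_neg hsup] at this
  have h3 : (∑ L ∈ (Finset.univ.filter (fun L : Subgroup G => H ≤ L)).filter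
      (fun L => ¬ frattini G ≤ L), μ L) = μ H := by
    refine Finset.sum_eq_single_of_mem H ?_ ?_
    · simp [hH]
    · intro L hL hne
      simp only [Finset.mem_filter] at hL
      exact IH L (by exact lt_of_le_of_ne hL.1.2 (Ne.symm hne)) hL.2
  rw [h2, h3, zero_add] at h1
  exact h1

theorem elementaryAbelian_of_mobius_ne_zero (p n : ℕ) (hp : p.Prime)
    (G : Type*) [Group G] [Fintype G] (hG : Nat.card G = p ^ n)
    (μ : Subgroup G → ℤ) (hμ : IsMobius μ) (h : μ ⊥ ≠ 0) :
    (∀ a b : G, a * b = b * a) ∧ ∀ g : G, g ^ p = 1 := by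
  haveI : Fact p.Prime := ⟨hp⟩
  have hpG : IsPGroup p G := IsPGroup.of_card hG
  -- the Frattini subgroup is trivial
  have hfrat : frattini G ≤ ⊥ := by
    by_contra hc
    exact h (mu_eq_zero_of_not_frattini_le μ hμ ⊥ hc)
  -- For every coatom M, the quotient G/M is elementary abelian of order p;
  -- hence commutators and p-th powers lie in every coatom.
  have coatom_prop : ∀ M : Subgroup G, IsCoatom M →
      (∀ a b : G, a * b * a⁻¹ * b⁻¹ ∈ M) ∧ (∀ g : G, g ^ p ∈ M) := by
    intro M hM
    haveI hnil : Group.IsNilpotent G := hpG.isNilpotent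
    haveI hMn : M.Normal :=
      Subgroup.NormalizerCondition.normal_of_coatom M
        normalizerCondition_of_isNilpotent hM
    set Q := G ⧸ M with hQ
    have hQp : IsPGroup p Q := hpG.to_quotient M
    -- every subgroup of Q is ⊥ or ⊤
    have hsub : ∀ K : Subgroup Q, K = ⊥ ∨ K = ⊤ := by
      intro K
      have hsurj : Function.Surjective (QuotientGroup.mk' M) :=
        QuotientGroup.mk'_surjective M
      have hker : (QuotientGroup.mk' M).ker = M := QuotientGroup.ker_mk' M
      have hle : M ≤ K.comap (QuotientGroup.mk' M) := by
        intro x hx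
        refine Subgroup.mem_comap.mpr ?_
        have hx1 : (QuotientGroup.mk' M) x = 1 := by
          rw [← hker] at hx
          exact hx
        rw [hx1]
        exact K.one_mem
      have hmapcomap : (K.comap (QuotientGroup.mk' M)).map (QuotientGroup.mk' M) = K :=
        Subgroup.map_comap_eq_self_of_surjective hsurj K
      rcases eq_or_lt_of_le hle with heq | hlt
      · left
        rw [← hmapcomap, ← heq, Subgroup.map_eq_bot_iff, hker]
      · right
        have : K.comap (QuotientGroup.mk' M) = ⊤ := hM.2 _ hlt
        rw [← hmapcomap, this, Subgroup.map_top_of_surjective _ hsurj]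
    -- every element of Q has p-th power 1
    have hpow : ∀ z : Q, z ^ p = 1 := by
      intro z
      rcases eq_or_ne z 1 with rfl | hz
      · simp
      · rcases hsub (Subgroup.zpowers (z ^ p)) with hb | ht
        · exact (Subgroup.zpowers_eq_bot).mp hb
        · exfalso
          obtain ⟨k, hk⟩ := IsPGroup.iff_orderOf.mp hQp z
          have hk0 : k ≠ 0 := by
            rintro rfl
            exact hz (orderOf_eq_one_iff.mp (by simpa using hk))
          have hcard : orderOf (z ^ p) = Nat.card Q := by
            rw [← Nat.card_zpowers, ht]
            exact Subgroup.card_top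
          have hdvd : orderOf z ∣ Nat.card Q := orderOf_dvd_natCard z
          have hord : orderOf (z ^ p) = p ^ (k - 1) := by
            rw [orderOf_pow, hk]
            have hgcd : Nat.gcd (p ^ k) p = p :=
              Nat.gcd_eq_right (dvd_pow_self p hk0)
            rw [hgcd]
            obtain ⟨k', rfl⟩ : ∃ k', k = k' + 1 := ⟨k - 1, by omega⟩
            rw [pow_succ, Nat.mul_div_cancel _ hp.pos]
            simp
          have hdvd2 : p ^ k ∣ p ^ (k - 1) := by
            rw [← hord, hcard, ← hk]; exact hdvd
          have hle := (Nat.pow_dvd_pow_iff_le_right hp.one_lt).mp hdvd2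
          omega
    -- Q is commutative
    have hcomm : ∀ x y : Q, x * y = y * x := by
      obtain ⟨w, hw⟩ : ∃ w : G, w ∉ M := by
        by_contra hc
        push_neg at hc
        exact hM.1 ((Subgroup.eq_top_iff' M).mpr hc)
      set z : Q := QuotientGroup.mk w with hzdef
      have hz : z ≠ 1 := fun e => hw ((QuotientGroup.eq_one_iff w).mp e)
      have htop : Subgroup.zpowers z = ⊤ := by
        rcases hsub (Subgroup.zpowers z) with hb | ht
        · exact absurd (Subgroup.zpowers_eq_bot.mp hb) hz
        · exact ht
      intro x y
      have hx : x ∈ Subgroup.zpowers z := htop ▸ Subgroup.mem_top x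
      have hy : y ∈ Subgroup.zpowers z := htop ▸ Subgroup.mem_top y
      obtain ⟨i, rfl⟩ := hx
      obtain ⟨j, rfl⟩ := hy
      exact ((Commute.refl z).zpow_zpow i j)
    constructor
    · intro a b
      have hone : ((a * b * a⁻¹ * b⁻¹ : G) : Q) = 1 := by
        simp only [QuotientGroup.mk_mul, QuotientGroup.mk_inv]
        rw [hcomm ((a : G) : Q) ((b : G) : Q)]
        group
      exact (QuotientGroup.eq_one_iff _).mp hone
    · intro g
      have hone : ((g ^ p : G) : Q) = 1 := by
        rw [QuotientGroup.mk_pow]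
        exact hpow _
      exact (QuotientGroup.eq_one_iff _).mp hone
  -- now put things together
  have mem_frattini : ∀ x : G, (∀ M : Subgroup G, IsCoatom M → x ∈ M) → x = 1 := by
    intro x hx
    have hxf : x ∈ frattini G := by
      rw [frattini, Order.radical]
      simp only [Subgroup.mem_iInf]
      intro M hMc
      exact hx M hMc
    have hxbot : x ∈ (⊥ : Subgroup G) := hfrat hxf
    simpa using hxbot
  constructor
  · intro a b
    have h1 : a * b * a⁻¹ * b⁻¹ = 1 :=
      mem_frattini _ (fun M hM => (coatom_prop M hM).1 a b)
    have h2 : a * b * a⁻¹ = b := mul_inv_eq_one.mp h1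
    conv_rhs => rw [← h2]
    group
  · intro g
    exact mem_frattini _ (fun M hM => (coatom_prop M hM).2 g)
end

section
/- Let p be a prime and G = ℤ/p^{λ₁} × ℤ/p^{λ₂} × ℤ/p^{λ₃} with λ₁ > λ₂ > λ₃ ≥ 1. Among the p² + p + 1 maximal subgroups of G: exactly p² are isomorphic to ℤ/p^{λ₁} × ℤ/p^{λ₂} × ℤ/p^{λ₃−1}, exactly p are isomorphic to ℤ/p^{λ₁} × ℤ/p^{λ₂−1} × ℤ/p^{λ₃}, and exactly 1 is isomorphic to ℤ/p^{λ₁−1} × ℤ/p^{λ₂} × ℤ/p^{λ₃}. -/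
namespace CMS

/-- The injection `ZMod m →+ ZMod n`, `t ↦ d * t`, when `n = d * m`. -/
noncomputable def iota (d m n : ℕ) (h : (n : ℤ) = d * m) : ZMod m →+ ZMod n :=
  ZMod.lift m ⟨zmultiplesHom _ ((d : ZMod n)), by
    simp only [zmultiplesHom_apply]
    have : (m : ℤ) • (d : ZMod n) = ((m * d : ℤ) : ZMod n) := by
      rw [zsmul_eq_mul]; norm_cast
    rw [this]
    have : ((m * d : ℤ) : ZMod n) = ((n : ℤ) : ZMod n) := by rw [h]; ring_nf
    rw [this]; simp⟩

theorem iota_apply (d m n : ℕ) [NeZero m] (h : (n : ℤ) = d * m) (t : ZMod m) :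
    iota d m n h t = ((d * t.val : ℕ) : ZMod n) := by
  conv_lhs => rw [show t = ((t.val : ℤ) : ZMod m) by simp [ZMod.natCast_val]]
  rw [iota, ZMod.lift_coe]
  simp only [zmultiplesHom_apply, zsmul_eq_mul]
  push_cast; ring

theorem iota_injective (d m n : ℕ) [NeZero m] (hd : 0 < d) (h : (n : ℤ) = d * m) :
    Function.Injective (iota d m n h) := by
  have hn : n = d * m := by exact_mod_cast h
  have hm : 0 < m := Nat.pos_of_ne_zero (NeZero.ne m)
  have hnpos : 0 < n := by rw [hn]; positivity
  haveI : NeZero n := ⟨hnpos.ne'⟩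
  intro s t hst
  rw [iota_apply, iota_apply] at hst
  have hs := ZMod.val_lt s
  have ht := ZMod.val_lt t
  have : d * s.val = d * t.val := by
    have h1 : d * s.val < n := by rw [hn]; exact (Nat.mul_lt_mul_left hd).mpr hs
    have h2 : d * t.val < n := by rw [hn]; exact (Nat.mul_lt_mul_left hd).mpr ht
    have := (ZMod.natCast_eq_natCast_iff' _ _ _).mp hst
    rwa [Nat.mod_eq_of_lt h1, Nat.mod_eq_of_lt h2] at this
  have : s.val = t.val := Nat.eq_of_mul_eq_mul_left hd this
  exact ZMod.val_injective _ this

theorem mem_range_iota (d m n : ℕ) [NeZero m] (hd : 0 < d) (h : (n : ℤ) = d * m)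
    (x : ZMod n) : x ∈ Set.range (iota d m n h) ↔ d ∣ x.val := by
  have hn : n = d * m := by exact_mod_cast h
  have hm : 0 < m := Nat.pos_of_ne_zero (NeZero.ne m)
  haveI : NeZero n := ⟨by rw [hn]; positivity⟩
  constructor
  · rintro ⟨t, rfl⟩
    rw [iota_apply]
    have h1 : d * t.val < n := by rw [hn]; exact (Nat.mul_lt_mul_left hd).mpr (ZMod.val_lt t)
    rw [ZMod.val_natCast_of_lt h1]
    exact Dvd.intro _ rfl
  · rintro ⟨t, ht⟩
    have htlt : t < m := by
      have hlt : d * t < d * m := by rw [← ht, ← hn]; exact ZMod.val_lt x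
      exact Nat.lt_of_mul_lt_mul_left hlt
    refine ⟨(t : ZMod m), ?_⟩
    rw [iota_apply, ZMod.val_natCast_of_lt htlt, ← ht, ZMod.natCast_val, ZMod.cast_id]

/-- torsion characterization: `m • x = 0 ↔ d ∣ x.val` in `ZMod n` where `n = d * m`. -/
theorem nsmul_eq_zero_iff (d m n : ℕ) (hd : 0 < d) (hm : 0 < m) (h : (n : ℤ) = d * m)
    (x : ZMod n) : m • x = 0 ↔ d ∣ x.val := by
  have hn : n = d * m := by exact_mod_cast h
  haveI : NeZero n := ⟨by rw [hn]; positivity⟩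
  have : m • x = ((m * x.val : ℕ) : ZMod n) := by
    conv_lhs => rw [show x = ((x.val : ℕ) : ZMod n) by rw [ZMod.natCast_val, ZMod.cast_id]]
    simp [nsmul_eq_mul]
  rw [this, ZMod.natCast_eq_zero_iff]
  constructor
  · intro hdvd
    have h2 : m * d ∣ m * x.val := by rw [mul_comm m d, ← hn]; exact hdvd
    exact (Nat.mul_dvd_mul_iff_left hm).mp h2
  · rintro ⟨t, ht⟩
    exact ⟨t, by rw [ht, hn]; ring⟩

theorem card_tors_prod (c : ℕ) (M N : Type*) [AddCommGroup M] [AddCommGroup N] :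
    Nat.card {x : M × N // c • x = 0} =
      Nat.card {a : M // c • a = 0} * Nat.card {b : N // c • b = 0} := by
  rw [← Nat.card_prod]
  refine Nat.card_congr ?_
  refine (Equiv.subtypeEquivRight (fun x => ?_)).trans (Equiv.subtypeProdEquivProd)
  constructor
  · intro hx; exact ⟨congrArg Prod.fst hx, congrArg Prod.snd hx⟩
  · intro hx; exact Prod.ext hx.1 hx.2

theorem card_tors_congr {M N : Type*} [AddCommGroup M] [AddCommGroup N] (e : M ≃+ N) (c : ℕ) :
    Nat.card {x : M // c • x = 0} = Nat.card {x : N // c • x = 0} := by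
  refine Nat.card_congr (e.toEquiv.subtypeEquiv (fun a => ?_))
  rw [show e.toEquiv a = e a from rfl, ← map_nsmul]
  exact ⟨fun h => by rw [h, map_zero], fun h => e.injective (by rwa [map_zero])⟩

theorem card_torsion (d m n : ℕ) (hd : 0 < d) (hm : 0 < m) (h : (n : ℤ) = d * m) :
    Nat.card {x : ZMod n // m • x = 0} = m := by
  haveI : NeZero m := ⟨hm.ne'⟩
  have key : Nat.card {x : ZMod n // m • x = 0} = Nat.card (ZMod m) := by
    refine Nat.card_congr (Equiv.symm ?_)
    refine Equiv.ofBijective (fun t => ⟨iota d m n h t, ?_⟩) ⟨?_, ?_⟩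
    · rw [nsmul_eq_zero_iff d m n hd hm h, ← mem_range_iota d m n hd h]; exact ⟨t, rfl⟩
    · intro s t hst
      exact iota_injective d m n hd h (congrArg Subtype.val hst)
    · rintro ⟨x, hx⟩
      obtain ⟨t, ht⟩ := (mem_range_iota d m n hd h x).mpr
        ((nsmul_eq_zero_iff d m n hd hm h x).mp hx)
      exact ⟨t, Subtype.ext ht⟩
  rw [key, Nat.card_zmod]

theorem card_tors_univ (p : ℕ) (hp : 1 < p) (k l : ℕ) (hlk : l ≤ k) :
    Nat.card {x : ZMod (p ^ l) // p ^ k • x = 0} = p ^ l := by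
  have hall : ∀ x : ZMod (p ^ l), p ^ k • x = 0 := by
    intro x
    have hpk : p ^ k = p ^ (k - l) * p ^ l := by rw [← pow_add]; congr 1; omega
    rw [hpk, mul_nsmul, nsmul_eq_mul, ZMod.natCast_self, zero_mul]
  rw [Nat.card_congr (Equiv.subtypeUnivEquiv hall), Nat.card_zmod]

theorem card_tors_zmod_pow (p : ℕ) (hp : 1 < p) (k l : ℕ) :
    Nat.card {x : ZMod (p ^ l) // p ^ k • x = 0} = p ^ (min k l) := by
  rcases le_total l k with hlk | hkl
  · rw [min_eq_right hlk]
    exact card_tors_univ p hp k l hlk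
  · rw [min_eq_left hkl]
    refine card_torsion (p ^ (l - k)) (p ^ k) (p ^ l)
      (pow_pos (by omega) _) (pow_pos (by omega) _) ?_
    push_cast
    rw [← pow_add]
    congr 1
    omega

end CMS


open CMS

namespace CMSMain

variable (p l1 l2 l3 : ℕ)

/-- The functional `(a,b,c) ↦ v₁ ā + v₂ b̄ + v₃ c̄`. -/
def phi (h1 : l1 ≠ 0) (h2 : l2 ≠ 0) (h3 : l3 ≠ 0) (v : ZMod p × ZMod p × ZMod p) :
    (ZMod (p ^ l1) × ZMod (p ^ l2) × ZMod (p ^ l3)) →+ ZMod p where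
  toFun x := v.1 * ZMod.castHom (dvd_pow_self p h1) (ZMod p) x.1
           + v.2.1 * ZMod.castHom (dvd_pow_self p h2) (ZMod p) x.2.1
           + v.2.2 * ZMod.castHom (dvd_pow_self p h3) (ZMod p) x.2.2
  map_zero' := by simp
  map_add' := by intro x y; simp only [Prod.fst_add, Prod.snd_add, map_add]; ring

theorem phi_apply (h1 : l1 ≠ 0) (h2 : l2 ≠ 0) (h3 : l3 ≠ 0) (v : ZMod p × ZMod p × ZMod p)
    (x : ZMod (p ^ l1) × ZMod (p ^ l2) × ZMod (p ^ l3)) :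
    phi p l1 l2 l3 h1 h2 h3 v x
      = v.1 * ZMod.castHom (dvd_pow_self p h1) (ZMod p) x.1
      + v.2.1 * ZMod.castHom (dvd_pow_self p h2) (ZMod p) x.2.1
      + v.2.2 * ZMod.castHom (dvd_pow_self p h3) (ZMod p) x.2.2 := rfl

theorem phi_surjective (hp : 1 < p) (h1 : l1 ≠ 0) (h2 : l2 ≠ 0) (h3 : l3 ≠ 0)
    (v : ZMod p × ZMod p × ZMod p) (h : v.1 = 1 ∨ v.2.1 = 1 ∨ v.2.2 = 1) :
    Function.Surjective (phi p l1 l2 l3 h1 h2 h3 v) := by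
  intro z
  rcases h with h | h | h
  · obtain ⟨a, ha⟩ := ZMod.ringHom_surjective (ZMod.castHom (dvd_pow_self p h1) (ZMod p)) z
    exact ⟨(a, 0, 0), by simp [phi_apply, h, ha]⟩
  · obtain ⟨a, ha⟩ := ZMod.ringHom_surjective (ZMod.castHom (dvd_pow_self p h2) (ZMod p)) z
    exact ⟨(0, a, 0), by simp [phi_apply, h, ha]⟩
  · obtain ⟨a, ha⟩ := ZMod.ringHom_surjective (ZMod.castHom (dvd_pow_self p h3) (ZMod p)) z
    exact ⟨(0, 0, a), by simp [phi_apply, h, ha]⟩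

theorem index_ker_phi (hp : 1 < p) (h1 : l1 ≠ 0) (h2 : l2 ≠ 0) (h3 : l3 ≠ 0)
    (v : ZMod p × ZMod p × ZMod p) (h : v.1 = 1 ∨ v.2.1 = 1 ∨ v.2.2 = 1) :
    (phi p l1 l2 l3 h1 h2 h3 v).ker.index = p := by
  rw [AddSubgroup.index_ker]
  rw [AddMonoidHom.range_eq_top_of_surjective _ (phi_surjective p l1 l2 l3 hp h1 h2 h3 v h)]
  rw [Nat.card_congr AddSubgroup.topEquiv.toEquiv]
  haveI : NeZero p := ⟨by omega⟩
  exact Nat.card_zmod p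

end CMSMain

namespace CMSMain2
open CMSMain

theorem hfac (p k : ℕ) (hk : k ≠ 0) : ((p ^ k : ℕ) : ℤ) = (p : ℕ) * ((p ^ (k - 1) : ℕ) : ℤ) := by
  push_cast
  rw [← pow_succ']
  congr 1
  omega

theorem val_smul_eq {p : ℕ} (hp : 1 < p) (α w : ZMod p) : α.val • w = α * w := by
  haveI : NeZero p := ⟨by omega⟩
  rw [nsmul_eq_mul, ZMod.natCast_val, ZMod.cast_id]

theorem cast_iota {p k : ℕ} (hp : 1 < p) (hk : k ≠ 0) (hdvd : p ∣ p ^ k) (t : ZMod (p ^ (k - 1))) :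
    ZMod.castHom hdvd (ZMod p) (CMS.iota p (p ^ (k - 1)) (p ^ k) (hfac p k hk) t) = 0 := by
  haveI : NeZero (p ^ (k - 1)) := ⟨pow_ne_zero _ (by omega)⟩
  rw [CMS.iota_apply, map_natCast]
  exact (ZMod.natCast_eq_zero_iff _ p).mpr ⟨t.val, rfl⟩

theorem cast_to_p_eq_zero_iff {p k : ℕ} (hp : 1 < p) (hk : k ≠ 0) (hdvd : p ∣ p ^ k)
    (d : ZMod (p ^ k)) : ZMod.castHom hdvd (ZMod p) d = 0 ↔ p ∣ d.val := by
  haveI : NeZero (p ^ k) := ⟨pow_ne_zero _ (by omega)⟩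
  have : d = ((d.val : ℕ) : ZMod (p ^ k)) := by rw [ZMod.natCast_val, ZMod.cast_id]
  conv_lhs => rw [this]
  rw [map_natCast]
  exact ZMod.natCast_eq_zero_iff _ p

end CMSMain2

namespace CMSMain3
open CMS CMSMain CMSMain2

variable (p l1 l2 l3 : ℕ)

noncomputable def e3 (hp : 1 < p) (h12 : l2 < l1) (h23 : l3 < l2) (h3 : 1 ≤ l3) (α β : ZMod p) :
    (ZMod (p ^ l1) × ZMod (p ^ l2) × ZMod (p ^ (l3 - 1))) →+
      (ZMod (p ^ l1) × ZMod (p ^ l2) × ZMod (p ^ l3)) where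
  toFun x := (x.1, x.2.1,
    CMS.iota p (p ^ (l3 - 1)) (p ^ l3) (hfac p l3 (by omega)) x.2.2
      - α.val • ZMod.castHom (pow_dvd_pow p (show l3 ≤ l1 by omega)) (ZMod (p ^ l3)) x.1
      - β.val • ZMod.castHom (pow_dvd_pow p (show l3 ≤ l2 by omega)) (ZMod (p ^ l3)) x.2.1)
  map_zero' := by simp
  map_add' := by
    intro x y
    simp only [Prod.fst_add, Prod.snd_add, map_add, smul_add, Prod.mk_add_mk, Prod.mk.injEq]
    refine ⟨trivial, trivial, by ring⟩

theorem e3_injective (hp : 1 < p) (h12 : l2 < l1) (h23 : l3 < l2) (h3 : 1 ≤ l3) (α β : ZMod p) :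
    Function.Injective (e3 p l1 l2 l3 hp h12 h23 h3 α β) := by
  haveI : NeZero (p ^ (l3 - 1)) := ⟨pow_ne_zero _ (by omega)⟩
  intro x y hxy
  simp only [e3, AddMonoidHom.coe_mk, ZeroHom.coe_mk, Prod.mk.injEq] at hxy
  obtain ⟨e1, e2, e3'⟩ := hxy
  rw [e1, e2] at e3'
  have hiota := sub_left_inj.mp (sub_left_inj.mp e3')
  exact Prod.ext e1 (Prod.ext e2
    (CMS.iota_injective p (p ^ (l3 - 1)) (p ^ l3) (by omega) _ hiota))

end CMSMain3

namespace R3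
open CMS CMSMain CMSMain2 CMSMain3

variable (p l1 l2 l3 : ℕ)

theorem range_e3 (hp : 1 < p) (h12 : l2 < l1) (h23 : l3 < l2) (h3 : 1 ≤ l3) (α β : ZMod p) :
    (e3 p l1 l2 l3 hp h12 h23 h3 α β).range
      = (phi p l1 l2 l3 (by omega) (by omega) (by omega) (α, β, 1)).ker := by
  haveI : NeZero p := ⟨by omega⟩
  haveI : NeZero (p ^ (l3 - 1)) := ⟨pow_ne_zero _ (by omega)⟩
  ext x
  rw [AddMonoidHom.mem_ker, phi_apply]
  constructor
  · rintro ⟨y, rfl⟩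
    simp only [e3, AddMonoidHom.coe_mk, ZeroHom.coe_mk, map_sub, map_nsmul]
    rw [cast_iota hp (show l3 ≠ 0 by omega)]
    rw [show ZMod.castHom (dvd_pow_self p (show l3 ≠ 0 by omega)) (ZMod p)
          (ZMod.castHom (pow_dvd_pow p (show l3 ≤ l1 by omega)) (ZMod (p ^ l3)) y.1)
        = ZMod.castHom (dvd_pow_self p (show l1 ≠ 0 by omega)) (ZMod p) y.1 from by
      rw [← RingHom.comp_apply, ZMod.castHom_comp]]
    rw [show ZMod.castHom (dvd_pow_self p (show l3 ≠ 0 by omega)) (ZMod p)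
          (ZMod.castHom (pow_dvd_pow p (show l3 ≤ l2 by omega)) (ZMod (p ^ l3)) y.2.1)
        = ZMod.castHom (dvd_pow_self p (show l2 ≠ 0 by omega)) (ZMod p) y.2.1 from by
      rw [← RingHom.comp_apply, ZMod.castHom_comp]]
    rw [val_smul_eq hp, val_smul_eq hp]
    ring
  · intro hx
    set A := ZMod.castHom (pow_dvd_pow p (show l3 ≤ l1 by omega)) (ZMod (p ^ l3)) x.1 with hA
    set B := ZMod.castHom (pow_dvd_pow p (show l3 ≤ l2 by omega)) (ZMod (p ^ l3)) x.2.1 with hB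
    set d := x.2.2 + α.val • A + β.val • B with hd
    have hcast : ZMod.castHom (dvd_pow_self p (show l3 ≠ 0 by omega)) (ZMod p) d = 0 := by
      rw [hd, map_add, map_add, map_nsmul, map_nsmul]
      rw [hA, ← RingHom.comp_apply, ZMod.castHom_comp]
      rw [hB, ← RingHom.comp_apply, ZMod.castHom_comp]
      rw [val_smul_eq hp, val_smul_eq hp]
      have := hx
      rw [show ZMod.castHom (dvd_trans (dvd_pow_self p (show l3 ≠ 0 by omega))
            (pow_dvd_pow p (show l3 ≤ l1 by omega))) (ZMod p)
          = ZMod.castHom (dvd_pow_self p (show l1 ≠ 0 by omega)) (ZMod p) from rfl]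
      rw [show ZMod.castHom (dvd_trans (dvd_pow_self p (show l3 ≠ 0 by omega))
            (pow_dvd_pow p (show l3 ≤ l2 by omega))) (ZMod p)
          = ZMod.castHom (dvd_pow_self p (show l2 ≠ 0 by omega)) (ZMod p) from rfl]
      linear_combination this
    obtain ⟨t, ht⟩ := (CMS.mem_range_iota p (p ^ (l3 - 1)) (p ^ l3) (by omega)
      (hfac p l3 (by omega)) d).mpr
      ((cast_to_p_eq_zero_iff hp (by omega) _ d).mp hcast)
    refine ⟨(x.1, x.2.1, t), ?_⟩
    simp only [e3, AddMonoidHom.coe_mk, ZeroHom.coe_mk]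
    refine Prod.ext rfl (Prod.ext rfl ?_)
    show CMS.iota p (p ^ (l3 - 1)) (p ^ l3) (hfac p l3 (by omega)) t
        - α.val • A - β.val • B = x.2.2
    rw [ht, hd]
    ring

end R3

namespace R2
open CMS CMSMain CMSMain2 CMSMain3

variable (p l1 l2 l3 : ℕ)

noncomputable def e2 (hp : 1 < p) (h12 : l2 < l1) (h23 : l3 < l2) (h3 : 1 ≤ l3) (α : ZMod p) :
    (ZMod (p ^ l1) × ZMod (p ^ (l2 - 1)) × ZMod (p ^ l3)) →+
      (ZMod (p ^ l1) × ZMod (p ^ l2) × ZMod (p ^ l3)) where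
  toFun x := (x.1,
    CMS.iota p (p ^ (l2 - 1)) (p ^ l2) (hfac p l2 (by omega)) x.2.1
      - α.val • ZMod.castHom (pow_dvd_pow p (show l2 ≤ l1 by omega)) (ZMod (p ^ l2)) x.1,
    x.2.2)
  map_zero' := by simp
  map_add' := by
    intro x y
    simp only [Prod.fst_add, Prod.snd_add, map_add, smul_add, Prod.mk_add_mk, Prod.mk.injEq]
    refine ⟨trivial, by ring, trivial⟩

theorem e2_injective (hp : 1 < p) (h12 : l2 < l1) (h23 : l3 < l2) (h3 : 1 ≤ l3) (α : ZMod p) :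
    Function.Injective (e2 p l1 l2 l3 hp h12 h23 h3 α) := by
  haveI : NeZero (p ^ (l2 - 1)) := ⟨pow_ne_zero _ (by omega)⟩
  intro x y hxy
  simp only [e2, AddMonoidHom.coe_mk, ZeroHom.coe_mk, Prod.mk.injEq] at hxy
  obtain ⟨e1, e2', e3'⟩ := hxy
  rw [e1] at e2'
  have hiota := sub_left_inj.mp e2'
  exact Prod.ext e1 (Prod.ext
    (CMS.iota_injective p (p ^ (l2 - 1)) (p ^ l2) (by omega) _ hiota) e3')

theorem range_e2 (hp : 1 < p) (h12 : l2 < l1) (h23 : l3 < l2) (h3 : 1 ≤ l3) (α : ZMod p) :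
    (e2 p l1 l2 l3 hp h12 h23 h3 α).range
      = (phi p l1 l2 l3 (by omega) (by omega) (by omega) (α, 1, 0)).ker := by
  haveI : NeZero p := ⟨by omega⟩
  haveI : NeZero (p ^ (l2 - 1)) := ⟨pow_ne_zero _ (by omega)⟩
  ext x
  rw [AddMonoidHom.mem_ker, phi_apply]
  constructor
  · rintro ⟨y, rfl⟩
    simp only [e2, AddMonoidHom.coe_mk, ZeroHom.coe_mk, map_sub, map_nsmul]
    rw [cast_iota hp (show l2 ≠ 0 by omega)]
    rw [show ZMod.castHom (dvd_pow_self p (show l2 ≠ 0 by omega)) (ZMod p)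
          (ZMod.castHom (pow_dvd_pow p (show l2 ≤ l1 by omega)) (ZMod (p ^ l2)) y.1)
        = ZMod.castHom (dvd_pow_self p (show l1 ≠ 0 by omega)) (ZMod p) y.1 from by
      rw [← RingHom.comp_apply, ZMod.castHom_comp]]
    rw [val_smul_eq hp]
    ring
  · intro hx
    set A := ZMod.castHom (pow_dvd_pow p (show l2 ≤ l1 by omega)) (ZMod (p ^ l2)) x.1 with hA
    set d := x.2.1 + α.val • A with hd
    have hcast : ZMod.castHom (dvd_pow_self p (show l2 ≠ 0 by omega)) (ZMod p) d = 0 := by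
      rw [hd, map_add, map_nsmul]
      rw [hA, ← RingHom.comp_apply, ZMod.castHom_comp]
      rw [val_smul_eq hp]
      rw [show ZMod.castHom (dvd_trans (dvd_pow_self p (show l2 ≠ 0 by omega))
            (pow_dvd_pow p (show l2 ≤ l1 by omega))) (ZMod p)
          = ZMod.castHom (dvd_pow_self p (show l1 ≠ 0 by omega)) (ZMod p) from rfl]
      linear_combination hx
    obtain ⟨t, ht⟩ := (CMS.mem_range_iota p (p ^ (l2 - 1)) (p ^ l2) (by omega)
      (hfac p l2 (by omega)) d).mpr
      ((cast_to_p_eq_zero_iff hp (by omega) _ d).mp hcast)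
    refine ⟨(x.1, t, x.2.2), ?_⟩
    simp only [e2, AddMonoidHom.coe_mk, ZeroHom.coe_mk]
    refine Prod.ext rfl (Prod.ext ?_ rfl)
    show CMS.iota p (p ^ (l2 - 1)) (p ^ l2) (hfac p l2 (by omega)) t - α.val • A = x.2.1
    rw [ht, hd]
    ring

end R2

namespace R1
open CMS CMSMain CMSMain2 CMSMain3

variable (p l1 l2 l3 : ℕ)

noncomputable def e1 (hp : 1 < p) (h12 : l2 < l1) (h23 : l3 < l2) (h3 : 1 ≤ l3) :
    (ZMod (p ^ (l1 - 1)) × ZMod (p ^ l2) × ZMod (p ^ l3)) →+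
      (ZMod (p ^ l1) × ZMod (p ^ l2) × ZMod (p ^ l3)) where
  toFun x := (CMS.iota p (p ^ (l1 - 1)) (p ^ l1) (hfac p l1 (by omega)) x.1, x.2.1, x.2.2)
  map_zero' := by simp
  map_add' := by
    intro x y
    simp only [Prod.fst_add, Prod.snd_add, map_add, Prod.mk_add_mk, Prod.mk.injEq]

theorem e1_injective (hp : 1 < p) (h12 : l2 < l1) (h23 : l3 < l2) (h3 : 1 ≤ l3) :
    Function.Injective (e1 p l1 l2 l3 hp h12 h23 h3) := by
  haveI : NeZero (p ^ (l1 - 1)) := ⟨pow_ne_zero _ (by omega)⟩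
  intro x y hxy
  simp only [e1, AddMonoidHom.coe_mk, ZeroHom.coe_mk, Prod.mk.injEq] at hxy
  obtain ⟨e1', e2', e3'⟩ := hxy
  exact Prod.ext (CMS.iota_injective p (p ^ (l1 - 1)) (p ^ l1) (by omega) _ e1')
    (Prod.ext e2' e3')

theorem range_e1 (hp : 1 < p) (h12 : l2 < l1) (h23 : l3 < l2) (h3 : 1 ≤ l3) :
    (e1 p l1 l2 l3 hp h12 h23 h3).range
      = (phi p l1 l2 l3 (by omega) (by omega) (by omega) (1, 0, 0)).ker := by
  haveI : NeZero p := ⟨by omega⟩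
  haveI : NeZero (p ^ (l1 - 1)) := ⟨pow_ne_zero _ (by omega)⟩
  ext x
  rw [AddMonoidHom.mem_ker, phi_apply]
  constructor
  · rintro ⟨y, rfl⟩
    simp only [e1, AddMonoidHom.coe_mk, ZeroHom.coe_mk]
    rw [cast_iota hp (show l1 ≠ 0 by omega)]
    ring
  · intro hx
    have hcast : ZMod.castHom (dvd_pow_self p (show l1 ≠ 0 by omega)) (ZMod p) x.1 = 0 := by
      linear_combination hx
    obtain ⟨t, ht⟩ := (CMS.mem_range_iota p (p ^ (l1 - 1)) (p ^ l1) (by omega)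
      (hfac p l1 (by omega)) x.1).mpr
      ((cast_to_p_eq_zero_iff hp (by omega) _ x.1).mp hcast)
    refine ⟨(t, x.2.1, x.2.2), ?_⟩
    simp only [e1, AddMonoidHom.coe_mk, ZeroHom.coe_mk]
    exact Prod.ext ht rfl

end R1

namespace CL
open CMS CMSMain CMSMain2

variable (p l1 l2 l3 : ℕ)

theorem hom_eq_phi (hp : 1 < p) (h1 : l1 ≠ 0) (h2 : l2 ≠ 0) (h3 : l3 ≠ 0)
    (ψ : (ZMod (p ^ l1) × ZMod (p ^ l2) × ZMod (p ^ l3)) →+ ZMod p) :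
    ψ = phi p l1 l2 l3 h1 h2 h3 (ψ (1, 0, 0), ψ (0, 1, 0), ψ (0, 0, 1)) := by
  haveI : NeZero p := ⟨by omega⟩
  haveI : NeZero (p ^ l1) := ⟨pow_ne_zero _ (by omega)⟩
  haveI : NeZero (p ^ l2) := ⟨pow_ne_zero _ (by omega)⟩
  haveI : NeZero (p ^ l3) := ⟨pow_ne_zero _ (by omega)⟩
  refine DFunLike.ext _ _ fun x => ?_
  have hx : x = (x.1, 0, 0) + (0, x.2.1, 0) + (0, 0, x.2.2) := by
    refine Prod.ext (by simp) (Prod.ext (by simp) (by simp))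
  rw [phi_apply]
  conv_lhs => rw [hx]
  rw [map_add, map_add]
  have d1 : (x.1, (0 : ZMod (p ^ l2)), (0 : ZMod (p ^ l3)))
      = x.1.val • ((1 : ZMod (p ^ l1)), (0 : ZMod (p ^ l2)), (0 : ZMod (p ^ l3))) := by
    refine Prod.ext ?_ (Prod.ext (by simp) (by simp))
    show x.1 = x.1.val • (1 : ZMod (p ^ l1))
    rw [nsmul_eq_mul, mul_one, ZMod.natCast_val, ZMod.cast_id]
  have d2 : ((0 : ZMod (p ^ l1)), x.2.1, (0 : ZMod (p ^ l3)))
      = x.2.1.val • ((0 : ZMod (p ^ l1)), (1 : ZMod (p ^ l2)), (0 : ZMod (p ^ l3))) := by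
    refine Prod.ext (by simp) (Prod.ext ?_ (by simp))
    show x.2.1 = x.2.1.val • (1 : ZMod (p ^ l2))
    rw [nsmul_eq_mul, mul_one, ZMod.natCast_val, ZMod.cast_id]
  have d3 : ((0 : ZMod (p ^ l1)), (0 : ZMod (p ^ l2)), x.2.2)
      = x.2.2.val • ((0 : ZMod (p ^ l1)), (0 : ZMod (p ^ l2)), (1 : ZMod (p ^ l3))) := by
    refine Prod.ext (by simp) (Prod.ext (by simp) ?_)
    show x.2.2 = x.2.2.val • (1 : ZMod (p ^ l3))
    rw [nsmul_eq_mul, mul_one, ZMod.natCast_val, ZMod.cast_id]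
  rw [d1, d2, d3, map_nsmul, map_nsmul, map_nsmul]
  rw [nsmul_eq_mul, nsmul_eq_mul, nsmul_eq_mul]
  rw [show (ZMod.castHom (dvd_pow_self p h1) (ZMod p)) x.1 = ((x.1.val : ℕ) : ZMod p) from by
    rw [ZMod.castHom_apply, ← ZMod.natCast_val]]
  rw [show (ZMod.castHom (dvd_pow_self p h2) (ZMod p)) x.2.1 = ((x.2.1.val : ℕ) : ZMod p) from by
    rw [ZMod.castHom_apply, ← ZMod.natCast_val]]
  rw [show (ZMod.castHom (dvd_pow_self p h3) (ZMod p)) x.2.2 = ((x.2.2.val : ℕ) : ZMod p) from by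
    rw [ZMod.castHom_apply, ← ZMod.natCast_val]]
  ring

theorem exists_v (hp : p.Prime) (h1 : l1 ≠ 0) (h2 : l2 ≠ 0) (h3 : l3 ≠ 0)
    (H : AddSubgroup (ZMod (p ^ l1) × ZMod (p ^ l2) × ZMod (p ^ l3))) (hH : H.index = p) :
    ∃ v : ZMod p × ZMod p × ZMod p, v ≠ 0 ∧ H = (phi p l1 l2 l3 h1 h2 h3 v).ker := by
  haveI : Fact p.Prime := ⟨hp⟩
  have hcard : Nat.card ((ZMod (p ^ l1) × ZMod (p ^ l2) × ZMod (p ^ l3)) ⧸ H) = p := by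
    rw [← AddSubgroup.index_eq_card]; exact hH
  let eqv : ((ZMod (p ^ l1) × ZMod (p ^ l2) × ZMod (p ^ l3)) ⧸ H) ≃+ ZMod p :=
    addEquivOfPrimeCardEq hcard (Nat.card_zmod p)
  let ψ := eqv.toAddMonoidHom.comp (QuotientAddGroup.mk' H)
  have hker : ψ.ker = H := by
    ext x
    rw [AddMonoidHom.mem_ker]
    show eqv ((QuotientAddGroup.mk' H) x) = 0 ↔ _
    rw [map_eq_zero_iff eqv eqv.injective, QuotientAddGroup.mk'_apply,
      QuotientAddGroup.eq_zero_iff]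
  refine ⟨(ψ (1, 0, 0), ψ (0, 1, 0), ψ (0, 0, 1)), ?_, ?_⟩
  · intro hv
    have hzero : ψ = phi p l1 l2 l3 h1 h2 h3 0 := by
      rw [hom_eq_phi p l1 l2 l3 hp.one_lt h1 h2 h3 ψ, hv]
    have hsurj : Function.Surjective ψ :=
      eqv.surjective.comp (QuotientAddGroup.mk'_surjective H)
    obtain ⟨y, hy⟩ := hsurj 1
    rw [hzero] at hy
    rw [phi_apply] at hy
    haveI : Fact (1 < p) := ⟨hp.one_lt⟩
    simp at hy
  · rw [← hker]
    exact congrArg AddMonoidHom.ker (hom_eq_phi p l1 l2 l3 hp.one_lt h1 h2 h3 ψ)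

theorem ker_phi_smul (hp : p.Prime) (h1 : l1 ≠ 0) (h2 : l2 ≠ 0) (h3 : l3 ≠ 0)
    (c : ZMod p) (hc : c ≠ 0) (v : ZMod p × ZMod p × ZMod p) :
    (phi p l1 l2 l3 h1 h2 h3 (c * v.1, c * v.2.1, c * v.2.2)).ker
      = (phi p l1 l2 l3 h1 h2 h3 v).ker := by
  haveI : Fact p.Prime := ⟨hp⟩
  ext x
  simp only [AddMonoidHom.mem_ker, phi_apply]
  constructor
  · intro h
    have hfac : c * (v.1 * ZMod.castHom (dvd_pow_self p h1) (ZMod p) x.1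
        + v.2.1 * ZMod.castHom (dvd_pow_self p h2) (ZMod p) x.2.1
        + v.2.2 * ZMod.castHom (dvd_pow_self p h3) (ZMod p) x.2.2) = 0 := by
      linear_combination h
    exact (mul_eq_zero.mp hfac).resolve_left hc
  · intro h
    linear_combination c * h

theorem normal_form (hp : p.Prime) (h1 : l1 ≠ 0) (h2 : l2 ≠ 0) (h3 : l3 ≠ 0)
    (H : AddSubgroup (ZMod (p ^ l1) × ZMod (p ^ l2) × ZMod (p ^ l3))) (hH : H.index = p) :
    (∃ a b : ZMod p, H = (phi p l1 l2 l3 h1 h2 h3 (a, b, 1)).ker)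
    ∨ (∃ a : ZMod p, H = (phi p l1 l2 l3 h1 h2 h3 (a, 1, 0)).ker)
    ∨ H = (phi p l1 l2 l3 h1 h2 h3 (1, 0, 0)).ker := by
  haveI : Fact p.Prime := ⟨hp⟩
  obtain ⟨v, hv0, rfl⟩ := exists_v p l1 l2 l3 hp h1 h2 h3 H hH
  by_cases hv3 : v.2.2 ≠ 0
  · left
    refine ⟨v.2.2⁻¹ * v.1, v.2.2⁻¹ * v.2.1, ?_⟩
    rw [show (1 : ZMod p) = v.2.2⁻¹ * v.2.2 from (inv_mul_cancel₀ hv3).symm]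
    exact (ker_phi_smul p l1 l2 l3 hp h1 h2 h3 v.2.2⁻¹ (inv_ne_zero hv3) v).symm
  · push_neg at hv3
    by_cases hv2 : v.2.1 ≠ 0
    · right; left
      refine ⟨v.2.1⁻¹ * v.1, ?_⟩
      have := (ker_phi_smul p l1 l2 l3 hp h1 h2 h3 v.2.1⁻¹ (inv_ne_zero hv2) v).symm
      rw [inv_mul_cancel₀ hv2, hv3, mul_zero] at this
      exact this
    · push_neg at hv2
      right; right
      have hv1 : v.1 ≠ 0 := by
        intro hv1
        exact hv0 (Prod.ext hv1 (Prod.ext hv2 hv3))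
      have := (ker_phi_smul p l1 l2 l3 hp h1 h2 h3 v.1⁻¹ (inv_ne_zero hv1) v).symm
      rw [inv_mul_cancel₀ hv1, hv2, hv3, mul_zero] at this
      exact this

end CL

namespace DIS
open CMS CMSMain CMSMain2

variable (p l1 l2 l3 : ℕ)

theorem cast_neg_val {p k : ℕ} [NeZero p] (h : p ∣ p ^ k) (a : ZMod p) :
    ZMod.castHom h (ZMod p) (((-(a.val : ℤ)) : ZMod (p ^ k))) = -a := by
  rw [map_neg, map_intCast]
  push_cast
  rw [ZMod.natCast_val, ZMod.cast_id]

theorem inj_i (hp : p.Prime) (h1 : l1 ≠ 0) (h2 : l2 ≠ 0) (h3 : l3 ≠ 0) (a b a' b' : ZMod p)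
    (h : (phi p l1 l2 l3 h1 h2 h3 (a, b, 1)).ker = (phi p l1 l2 l3 h1 h2 h3 (a', b', 1)).ker) :
    a = a' ∧ b = b' := by
  haveI : Fact p.Prime := ⟨hp⟩
  constructor
  · have mem : ((1 : ZMod (p ^ l1)), (0 : ZMod (p ^ l2)),
        (((-(a.val : ℤ)) : ZMod (p ^ l3)))) ∈ (phi p l1 l2 l3 h1 h2 h3 (a, b, 1)).ker := by
      rw [AddMonoidHom.mem_ker, phi_apply, map_one, map_zero, cast_neg_val]
      ring
    rw [h, AddMonoidHom.mem_ker, phi_apply, map_one, map_zero, cast_neg_val] at mem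
    have : a' - a = 0 := by linear_combination mem
    exact (sub_eq_zero.mp this).symm
  · have mem : ((0 : ZMod (p ^ l1)), (1 : ZMod (p ^ l2)),
        (((-(b.val : ℤ)) : ZMod (p ^ l3)))) ∈ (phi p l1 l2 l3 h1 h2 h3 (a, b, 1)).ker := by
      rw [AddMonoidHom.mem_ker, phi_apply, map_one, map_zero, cast_neg_val]
      ring
    rw [h, AddMonoidHom.mem_ker, phi_apply, map_one, map_zero, cast_neg_val] at mem
    have : b' - b = 0 := by linear_combination mem
    exact (sub_eq_zero.mp this).symm

theorem inj_ii (hp : p.Prime) (h1 : l1 ≠ 0) (h2 : l2 ≠ 0) (h3 : l3 ≠ 0) (a a' : ZMod p)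
    (h : (phi p l1 l2 l3 h1 h2 h3 (a, 1, 0)).ker = (phi p l1 l2 l3 h1 h2 h3 (a', 1, 0)).ker) :
    a = a' := by
  haveI : Fact p.Prime := ⟨hp⟩
  have mem : ((1 : ZMod (p ^ l1)), (((-(a.val : ℤ)) : ZMod (p ^ l2))),
      (0 : ZMod (p ^ l3))) ∈ (phi p l1 l2 l3 h1 h2 h3 (a, 1, 0)).ker := by
    rw [AddMonoidHom.mem_ker, phi_apply, map_one, map_zero, cast_neg_val]
    ring
  rw [h, AddMonoidHom.mem_ker, phi_apply, map_one, map_zero, cast_neg_val] at mem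
  have : a' - a = 0 := by linear_combination mem
  exact (sub_eq_zero.mp this).symm

theorem ne_iii (hp : p.Prime) (h1 : l1 ≠ 0) (h2 : l2 ≠ 0) (h3 : l3 ≠ 0) (a b a' : ZMod p) :
    (phi p l1 l2 l3 h1 h2 h3 (a, b, 1)).ker ≠ (phi p l1 l2 l3 h1 h2 h3 (a', 1, 0)).ker := by
  haveI : Fact (1 < p) := ⟨hp.one_lt⟩
  intro h
  have mem : ((0 : ZMod (p ^ l1)), (0 : ZMod (p ^ l2)), (1 : ZMod (p ^ l3)))
      ∈ (phi p l1 l2 l3 h1 h2 h3 (a', 1, 0)).ker := by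
    rw [AddMonoidHom.mem_ker, phi_apply]; simp
  rw [← h, AddMonoidHom.mem_ker, phi_apply, map_one] at mem
  simp at mem

theorem ne_iv (hp : p.Prime) (h1 : l1 ≠ 0) (h2 : l2 ≠ 0) (h3 : l3 ≠ 0) (a b : ZMod p) :
    (phi p l1 l2 l3 h1 h2 h3 (a, b, 1)).ker ≠ (phi p l1 l2 l3 h1 h2 h3 (1, 0, 0)).ker := by
  haveI : Fact (1 < p) := ⟨hp.one_lt⟩
  intro h
  have mem : ((0 : ZMod (p ^ l1)), (0 : ZMod (p ^ l2)), (1 : ZMod (p ^ l3)))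
      ∈ (phi p l1 l2 l3 h1 h2 h3 (1, 0, 0)).ker := by
    rw [AddMonoidHom.mem_ker, phi_apply]; simp
  rw [← h, AddMonoidHom.mem_ker, phi_apply, map_one] at mem
  simp at mem

theorem ne_v (hp : p.Prime) (h1 : l1 ≠ 0) (h2 : l2 ≠ 0) (h3 : l3 ≠ 0) (a : ZMod p) :
    (phi p l1 l2 l3 h1 h2 h3 (a, 1, 0)).ker ≠ (phi p l1 l2 l3 h1 h2 h3 (1, 0, 0)).ker := by
  haveI : Fact (1 < p) := ⟨hp.one_lt⟩
  intro h
  have mem : ((0 : ZMod (p ^ l1)), (1 : ZMod (p ^ l2)), (0 : ZMod (p ^ l3)))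
      ∈ (phi p l1 l2 l3 h1 h2 h3 (1, 0, 0)).ker := by
    rw [AddMonoidHom.mem_ker, phi_apply]; simp
  rw [← h, AddMonoidHom.mem_ker, phi_apply, map_one] at mem
  simp at mem

end DIS

namespace NI
open CMS CMSMain

theorem card_tors_T (p : ℕ) (hp : 1 < p) (k a b c : ℕ) :
    Nat.card {x : ZMod (p ^ a) × ZMod (p ^ b) × ZMod (p ^ c) // p ^ k • x = 0}
      = p ^ (min k a + min k b + min k c) := by
  rw [CMS.card_tors_prod, CMS.card_tors_prod, card_tors_zmod_pow p hp,
    card_tors_zmod_pow p hp, card_tors_zmod_pow p hp, pow_add, pow_add, mul_assoc]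

variable (p l1 l2 l3 : ℕ)

theorem noIso32 (hp : p.Prime) (h12 : l2 < l1) (h23 : l3 < l2) (h3 : 1 ≤ l3) :
    ¬ Nonempty ((ZMod (p ^ l1) × ZMod (p ^ l2) × ZMod (p ^ (l3 - 1)))
      ≃+ (ZMod (p ^ l1) × ZMod (p ^ (l2 - 1)) × ZMod (p ^ l3))) := by
  rintro ⟨e⟩
  have h := CMS.card_tors_congr e (p ^ l3)
  rw [card_tors_T p hp.one_lt, card_tors_T p hp.one_lt] at h
  have := Nat.pow_right_injective hp.two_le h
  omega

theorem noIso31 (hp : p.Prime) (h12 : l2 < l1) (h23 : l3 < l2) (h3 : 1 ≤ l3) :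
    ¬ Nonempty ((ZMod (p ^ l1) × ZMod (p ^ l2) × ZMod (p ^ (l3 - 1)))
      ≃+ (ZMod (p ^ (l1 - 1)) × ZMod (p ^ l2) × ZMod (p ^ l3))) := by
  rintro ⟨e⟩
  have h := CMS.card_tors_congr e (p ^ l3)
  rw [card_tors_T p hp.one_lt, card_tors_T p hp.one_lt] at h
  have := Nat.pow_right_injective hp.two_le h
  omega

theorem noIso21 (hp : p.Prime) (h12 : l2 < l1) (h23 : l3 < l2) (h3 : 1 ≤ l3) :
    ¬ Nonempty ((ZMod (p ^ l1) × ZMod (p ^ (l2 - 1)) × ZMod (p ^ l3))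
      ≃+ (ZMod (p ^ (l1 - 1)) × ZMod (p ^ l2) × ZMod (p ^ l3))) := by
  rintro ⟨e⟩
  have h := CMS.card_tors_congr e (p ^ (l1 - 1))
  rw [card_tors_T p hp.one_lt, card_tors_T p hp.one_lt] at h
  have := Nat.pow_right_injective hp.two_le h
  omega

end NI

namespace FIN
open CMS CMSMain CMSMain2 CMSMain3 R3 R2 R1 CL DIS NI

variable (p l1 l2 l3 : ℕ)

noncomputable def iso3 (hp : 1 < p) (h12 : l2 < l1) (h23 : l3 < l2) (h3 : 1 ≤ l3) (α β : ZMod p) :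
    ((phi p l1 l2 l3 (by omega) (by omega) (by omega) (α, β, 1)).ker)
      ≃+ (ZMod (p ^ l1) × ZMod (p ^ l2) × ZMod (p ^ (l3 - 1))) :=
  ((AddMonoidHom.ofInjective (e3_injective p l1 l2 l3 hp h12 h23 h3 α β)).trans
    (AddEquiv.addSubgroupCongr (range_e3 p l1 l2 l3 hp h12 h23 h3 α β))).symm

noncomputable def iso2 (hp : 1 < p) (h12 : l2 < l1) (h23 : l3 < l2) (h3 : 1 ≤ l3) (α : ZMod p) :
    ((phi p l1 l2 l3 (by omega) (by omega) (by omega) (α, 1, 0)).ker)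
      ≃+ (ZMod (p ^ l1) × ZMod (p ^ (l2 - 1)) × ZMod (p ^ l3)) :=
  ((AddMonoidHom.ofInjective (e2_injective p l1 l2 l3 hp h12 h23 h3 α)).trans
    (AddEquiv.addSubgroupCongr (range_e2 p l1 l2 l3 hp h12 h23 h3 α))).symm

noncomputable def iso1 (hp : 1 < p) (h12 : l2 < l1) (h23 : l3 < l2) (h3 : 1 ≤ l3) :
    ((phi p l1 l2 l3 (by omega) (by omega) (by omega) (1, 0, 0)).ker)
      ≃+ (ZMod (p ^ (l1 - 1)) × ZMod (p ^ l2) × ZMod (p ^ l3)) :=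
  ((AddMonoidHom.ofInjective (e1_injective p l1 l2 l3 hp h12 h23 h3)).trans
    (AddEquiv.addSubgroupCongr (range_e1 p l1 l2 l3 hp h12 h23 h3))).symm

end FIN

open CMS CMSMain CMSMain2 CMSMain3 R3 R2 R1 CL DIS NI FIN


theorem count_maximal_subgroups_by_type (p l1 l2 l3 : ℕ) (hp : p.Prime)
    (h12 : l2 < l1) (h23 : l3 < l2) (h3 : 1 ≤ l3) :
    Nat.card {H : AddSubgroup (ZMod (p ^ l1) × ZMod (p ^ l2) × ZMod (p ^ l3)) //
        H.index = p} = p ^ 2 + p + 1 ∧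
    Nat.card {H : AddSubgroup (ZMod (p ^ l1) × ZMod (p ^ l2) × ZMod (p ^ l3)) //
        H.index = p ∧
        Nonempty (H ≃+ (ZMod (p ^ l1) × ZMod (p ^ l2) × ZMod (p ^ (l3 - 1))))} = p ^ 2 ∧
    Nat.card {H : AddSubgroup (ZMod (p ^ l1) × ZMod (p ^ l2) × ZMod (p ^ l3)) //
        H.index = p ∧
        Nonempty (H ≃+ (ZMod (p ^ l1) × ZMod (p ^ (l2 - 1)) × ZMod (p ^ l3)))} = p ∧
    Nat.card {H : AddSubgroup (ZMod (p ^ l1) × ZMod (p ^ l2) × ZMod (p ^ l3)) //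
        H.index = p ∧
        Nonempty (H ≃+ (ZMod (p ^ (l1 - 1)) × ZMod (p ^ l2) × ZMod (p ^ l3)))} = 1 := by
  haveI : Fact p.Prime := ⟨hp⟩
  haveI : NeZero p := ⟨hp.ne_zero⟩
  have h1 : l1 ≠ 0 := by omega
  have h2 : l2 ≠ 0 := by omega
  have h3' : l3 ≠ 0 := by omega
  have hplt : 1 < p := hp.one_lt
  -- the parametrized subgroups
  refine ⟨?_, ?_, ?_, ?_⟩
  · -- total count
    have hbij : Function.Bijective
        (fun s : (ZMod p × ZMod p) ⊕ (ZMod p) ⊕ Unit =>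
          (show {H : AddSubgroup (ZMod (p ^ l1) × ZMod (p ^ l2) × ZMod (p ^ l3)) //
              H.index = p} from
            match s with
            | .inl (a, b) => ⟨(phi p l1 l2 l3 h1 h2 h3' (a, b, 1)).ker,
                index_ker_phi p l1 l2 l3 hplt h1 h2 h3' _ (Or.inr (Or.inr rfl))⟩
            | .inr (.inl a) => ⟨(phi p l1 l2 l3 h1 h2 h3' (a, 1, 0)).ker,
                index_ker_phi p l1 l2 l3 hplt h1 h2 h3' _ (Or.inr (Or.inl rfl))⟩
            | .inr (.inr _) => ⟨(phi p l1 l2 l3 h1 h2 h3' (1, 0, 0)).ker,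
                index_ker_phi p l1 l2 l3 hplt h1 h2 h3' _ (Or.inl rfl)⟩)) := by
      constructor
      · rintro (⟨a, b⟩ | a | u) (⟨a', b'⟩ | a' | u') hss <;>
          simp only [Subtype.mk.injEq] at hss
        · obtain ⟨ha, hb⟩ := inj_i p l1 l2 l3 hp h1 h2 h3' a b a' b' hss
          rw [ha, hb]
        · exact absurd hss (ne_iii p l1 l2 l3 hp h1 h2 h3' a b a')
        · exact absurd hss (ne_iv p l1 l2 l3 hp h1 h2 h3' a b)
        · exact absurd hss.symm (ne_iii p l1 l2 l3 hp h1 h2 h3' a' b' a)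
        · rw [inj_ii p l1 l2 l3 hp h1 h2 h3' a a' hss]
        · exact absurd hss (ne_v p l1 l2 l3 hp h1 h2 h3' a)
        · exact absurd hss.symm (ne_iv p l1 l2 l3 hp h1 h2 h3' a' b')
        · exact absurd hss.symm (ne_v p l1 l2 l3 hp h1 h2 h3' a')
        · rfl
      · rintro ⟨H, hH⟩
        rcases normal_form p l1 l2 l3 hp h1 h2 h3' H hH with ⟨a, b, rfl⟩ | ⟨a, rfl⟩ | rfl
        · exact ⟨.inl (a, b), rfl⟩
        · exact ⟨.inr (.inl a), rfl⟩
        · exact ⟨.inr (.inr Unit.unit), rfl⟩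
    have := (Nat.card_eq_of_bijective _ hbij).symm
    rw [this, Nat.card_sum, Nat.card_sum, Nat.card_prod, Nat.card_zmod]
    simp only [Nat.card_eq_fintype_card, Fintype.card_punit]
    ring
  · -- count of type T3
    have hbij : Function.Bijective
        (fun ab : ZMod p × ZMod p =>
          (show {H : AddSubgroup (ZMod (p ^ l1) × ZMod (p ^ l2) × ZMod (p ^ l3)) //
              H.index = p ∧ Nonempty
                (H ≃+ (ZMod (p ^ l1) × ZMod (p ^ l2) × ZMod (p ^ (l3 - 1))))} from
            ⟨(phi p l1 l2 l3 h1 h2 h3' (ab.1, ab.2, 1)).ker,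
              index_ker_phi p l1 l2 l3 hplt h1 h2 h3' _ (Or.inr (Or.inr rfl)),
              ⟨iso3 p l1 l2 l3 hplt h12 h23 h3 ab.1 ab.2⟩⟩)) := by
      constructor
      · rintro ⟨a, b⟩ ⟨a', b'⟩ hss
        simp only [Subtype.mk.injEq] at hss
        obtain ⟨ha, hb⟩ := inj_i p l1 l2 l3 hp h1 h2 h3' a b a' b' hss
        exact Prod.ext ha hb
      · rintro ⟨H, hH, hiso⟩
        rcases normal_form p l1 l2 l3 hp h1 h2 h3' H hH with ⟨a, b, rfl⟩ | ⟨a, rfl⟩ | rfl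
        · exact ⟨(a, b), rfl⟩
        · obtain ⟨e⟩ := hiso
          exact absurd ⟨e.symm.trans (iso2 p l1 l2 l3 hplt h12 h23 h3 a)⟩
            (noIso32 p l1 l2 l3 hp h12 h23 h3)
        · obtain ⟨e⟩ := hiso
          exact absurd ⟨e.symm.trans (iso1 p l1 l2 l3 hplt h12 h23 h3)⟩
            (noIso31 p l1 l2 l3 hp h12 h23 h3)
    have := (Nat.card_eq_of_bijective _ hbij).symm
    rw [this, Nat.card_prod, Nat.card_zmod]
    ring
  · -- count of type T2
    have hbij : Function.Bijective
        (fun a : ZMod p =>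
          (show {H : AddSubgroup (ZMod (p ^ l1) × ZMod (p ^ l2) × ZMod (p ^ l3)) //
              H.index = p ∧ Nonempty
                (H ≃+ (ZMod (p ^ l1) × ZMod (p ^ (l2 - 1)) × ZMod (p ^ l3)))} from
            ⟨(phi p l1 l2 l3 h1 h2 h3' (a, 1, 0)).ker,
              index_ker_phi p l1 l2 l3 hplt h1 h2 h3' _ (Or.inr (Or.inl rfl)),
              ⟨iso2 p l1 l2 l3 hplt h12 h23 h3 a⟩⟩)) := by
      constructor
      · intro a a' hss
        simp only [Subtype.mk.injEq] at hss
        exact inj_ii p l1 l2 l3 hp h1 h2 h3' a a' hss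
      · rintro ⟨H, hH, hiso⟩
        rcases normal_form p l1 l2 l3 hp h1 h2 h3' H hH with ⟨a, b, rfl⟩ | ⟨a, rfl⟩ | rfl
        · obtain ⟨e⟩ := hiso
          exact absurd ⟨(iso3 p l1 l2 l3 hplt h12 h23 h3 a b).symm.trans e⟩
            (noIso32 p l1 l2 l3 hp h12 h23 h3)
        · exact ⟨a, rfl⟩
        · obtain ⟨e⟩ := hiso
          exact absurd ⟨e.symm.trans (iso1 p l1 l2 l3 hplt h12 h23 h3)⟩
            (noIso21 p l1 l2 l3 hp h12 h23 h3)
    have := (Nat.card_eq_of_bijective _ hbij).symm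
    rw [this, Nat.card_zmod]
  · -- count of type T1
    have hbij : Function.Bijective
        (fun _ : Unit =>
          (show {H : AddSubgroup (ZMod (p ^ l1) × ZMod (p ^ l2) × ZMod (p ^ l3)) //
              H.index = p ∧ Nonempty
                (H ≃+ (ZMod (p ^ (l1 - 1)) × ZMod (p ^ l2) × ZMod (p ^ l3)))} from
            ⟨(phi p l1 l2 l3 h1 h2 h3' (1, 0, 0)).ker,
              index_ker_phi p l1 l2 l3 hplt h1 h2 h3' _ (Or.inl rfl),
              ⟨iso1 p l1 l2 l3 hplt h12 h23 h3⟩⟩)) := by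
      constructor
      · intro a a' _; rfl
      · rintro ⟨H, hH, hiso⟩
        rcases normal_form p l1 l2 l3 hp h1 h2 h3' H hH with ⟨a, b, rfl⟩ | ⟨a, rfl⟩ | rfl
        · obtain ⟨e⟩ := hiso
          exact absurd ⟨(iso3 p l1 l2 l3 hplt h12 h23 h3 a b).symm.trans e⟩
            (noIso31 p l1 l2 l3 hp h12 h23 h3)
        · obtain ⟨e⟩ := hiso
          exact absurd ⟨(iso2 p l1 l2 l3 hplt h12 h23 h3 a).symm.trans e⟩
            (noIso21 p l1 l2 l3 hp h12 h23 h3)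
        · exact ⟨Unit.unit, rfl⟩
    have := (Nat.card_eq_of_bijective _ hbij).symm
    rw [this]
    simp
end

section
/- Let p be a prime and G = ℤ/p^{λ₁} × ℤ/p^{λ₂} × ℤ/p^{λ₃} with λ₁ > λ₂ > λ₃ ≥ 1, M the subgroup of elements of order dividing p, and N ≤ M a subgroup of order p. Then G/N is isomorphic to a maximal subgroup of G; specifically, G/N is isomorphic to one of ℤ/p^{λ₁−1} × ℤ/p^{λ₂} × ℤ/p^{λ₃}, ℤ/p^{λ₁} × ℤ/p^{λ₂−1} × ℤ/p^{λ₃}, or ℤ/p^{λ₁} × ℤ/p^{λ₂} × ℤ/p^{λ₃−1}. -/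
open AddSubgroup

/-- The subgroup of elements of order dividing `p` in an additive commutative group. -/
def pTorsion (p : ℕ) (G : Type*) [AddCommGroup G] : AddSubgroup G where
  carrier := {g | p • g = 0}
  zero_mem' := by simp
  add_mem' := by intro a b ha hb; simp only [Set.mem_setOf_eq, smul_add] at *; rw [ha, hb, add_zero]
  neg_mem' := by intro a ha; simp only [Set.mem_setOf_eq, smul_neg] at *; rw [ha, neg_zero]

section Helpers

variable {p : ℕ}

lemma pow_pred (p : ℕ) {l : ℕ} (hl : 1 ≤ l) : p ^ l = p ^ (l - 1) * p := by
  conv_lhs => rw [show l = (l - 1) + 1 by omega]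
  rw [pow_succ]

/-- torsion structure -/
lemma tor_struct (hp : p.Prime) {l : ℕ} (hl : 1 ≤ l) {x : ZMod (p ^ l)} (hx : p • x = 0) :
    ∃ k : ℕ, x = ((p ^ (l - 1) * k : ℕ) : ZMod (p ^ l)) := by
  haveI : NeZero (p ^ l) := ⟨pow_ne_zero _ hp.pos.ne'⟩
  have hx' : ((p * x.val : ℕ) : ZMod (p ^ l)) = 0 := by
    push_cast [ZMod.natCast_val, ZMod.cast_id]
    rw [← nsmul_eq_mul]; exact hx
  have hdvd : p ^ l ∣ p * x.val := (ZMod.natCast_eq_zero_iff _ _).mp hx'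
  have hdvd2 : p ^ (l - 1) ∣ x.val := by
    rw [← Nat.mul_dvd_mul_iff_left hp.pos,
      show p * p ^ (l - 1) = p ^ l by rw [pow_pred p hl]; ring]
    exact hdvd
  obtain ⟨k, hk⟩ := hdvd2
  exact ⟨k, by rw [← hk, ZMod.natCast_zmod_val]⟩

lemma tor_struct' (hp : p.Prime) {l : ℕ} (hl : 1 ≤ l) {x : ZMod (p ^ l)} (hx : p • x = 0)
    (hx0 : x ≠ 0) :
    ∃ k : ℕ, ¬ p ∣ k ∧ x = ((p ^ (l - 1) * k : ℕ) : ZMod (p ^ l)) := by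
  obtain ⟨k, hk⟩ := tor_struct hp hl hx
  refine ⟨k, fun hdvd => hx0 ?_, hk⟩
  obtain ⟨m, rfl⟩ := hdvd
  rw [hk]
  have : (p ^ l : ℕ) ∣ p ^ (l - 1) * (p * m) := ⟨m, by rw [pow_pred p hl]; ring⟩
  exact (ZMod.natCast_eq_zero_iff _ _).mpr this

lemma inv_exists (hp : p.Prime) {k : ℕ} (hk : ¬ p ∣ k) : ∃ k' c : ℕ, k * k' = p * c + 1 := by
  haveI : Fact p.Prime := ⟨hp⟩
  have h0 : (k : ZMod p) ≠ 0 := by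
    simpa [ZMod.natCast_eq_zero_iff] using hk
  refine ⟨((k : ZMod p)⁻¹).val, (k * ((k : ZMod p)⁻¹).val) / p, ?_⟩
  have h1 : ((k * ((k : ZMod p)⁻¹).val : ℕ) : ZMod p) = ((1 : ℕ) : ZMod p) := by
    push_cast [ZMod.natCast_val, ZMod.cast_id]
    exact mul_inv_cancel₀ h0
  have h2 : (k * ((k : ZMod p)⁻¹).val) % p = 1 % p := (ZMod.natCast_eq_natCast_iff _ _ _).mp h1
  have h3 : 1 % p = 1 := Nat.mod_eq_of_lt hp.one_lt
  have h4 := Nat.div_add_mod (k * ((k : ZMod p)⁻¹).val) p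
  omega

lemma cast_pow_top_zero (p : ℕ) (t : ℕ) : ((p : ZMod (p ^ t)) ^ t) = 0 := by
  rw [show ((p : ZMod (p ^ t)) ^ t) = ((p ^ t : ℕ) : ZMod (p ^ t)) by push_cast; ring,
    ZMod.natCast_self]

/-- existence of a hom hitting a prescribed torsion element -/
lemma exists_hom (hp : p.Prime) {s t : ℕ} (hs : 1 ≤ s) (hst : s ≤ t) {u : ZMod (p ^ s)}
    (hu : p • u = 0) (hu0 : u ≠ 0) {a : ZMod (p ^ t)} (ha : p • a = 0) :
    ∃ ψ : ZMod (p ^ s) →+ ZMod (p ^ t), ψ u = a := by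
  obtain ⟨k, hkp, hk⟩ := tor_struct' hp hs hu hu0
  obtain ⟨α, hα⟩ := tor_struct hp (hs.trans hst) ha
  obtain ⟨k', c, hkk⟩ := inv_exists hp hkp
  set m : ZMod (p ^ t) := ((p ^ (t - s) * k' * α : ℕ) : ZMod (p ^ t)) with hm
  have hord : (zmultiplesHom _ m) ((p ^ s : ℕ) : ℤ) = 0 := by
    rw [zmultiplesHom_apply, hm]
    have h1 : ((p ^ s : ℕ) : ℤ) • ((p ^ (t - s) * k' * α : ℕ) : ZMod (p ^ t)) =
        ((p ^ s * (p ^ (t - s) * k' * α) : ℕ) : ZMod (p ^ t)) := by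
      push_cast [zsmul_eq_mul]; ring
    have e : p ^ s * p ^ (t - s) = p ^ t := by rw [← pow_add]; congr 1; omega
    rw [h1, show p ^ s * (p ^ (t - s) * k' * α) = p ^ t * (k' * α) by rw [← e]; ring]
    rw [Nat.cast_mul, ZMod.natCast_self, zero_mul]
  refine ⟨ZMod.lift _ ⟨zmultiplesHom _ m, by exact_mod_cast hord⟩, ?_⟩
  have hu' : u = (((p ^ (s - 1) * k : ℕ) : ℤ) : ZMod (p ^ s)) := by rw [hk]; push_cast; ring
  rw [hu', ZMod.lift_coe, zmultiplesHom_apply, hm]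
  have h2 : ((p ^ (s - 1) * k : ℕ) : ℤ) • ((p ^ (t - s) * k' * α : ℕ) : ZMod (p ^ t)) =
      (((p ^ (s - 1) * k) * (p ^ (t - s) * k' * α) : ℕ) : ZMod (p ^ t)) := by
    push_cast [zsmul_eq_mul]; ring
  rw [h2]
  have hnat : (p ^ (s - 1) * k) * (p ^ (t - s) * k' * α) = p ^ t * (c * α) + p ^ (t - 1) * α := by
    have e1 : p ^ (s - 1) * p ^ (t - s) = p ^ (t - 1) := by
      rw [← pow_add]; congr 1; omega
    calc (p ^ (s - 1) * k) * (p ^ (t - s) * k' * α)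
        = (p ^ (s - 1) * p ^ (t - s)) * ((k * k') * α) := by ring
      _ = p ^ (t - 1) * ((p * c + 1) * α) := by rw [e1, hkk]
      _ = (p ^ (t - 1) * p) * (c * α) + p ^ (t - 1) * α := by ring
      _ = p ^ t * (c * α) + p ^ (t - 1) * α := by rw [← pow_pred p (hs.trans hst)]
  rw [hnat, hα, Nat.cast_add, Nat.cast_mul, ZMod.natCast_self, zero_mul, zero_add]

/-- any nonzero p-torsion element generates the canonical order-p subgroup -/
lemma zmult_eq (hp : p.Prime) {l : ℕ} (hl : 1 ≤ l) {u : ZMod (p ^ l)} (hu : p • u = 0)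
    (hu0 : u ≠ 0) :
    zmultiples u = zmultiples ((p ^ (l - 1) : ℕ) : ZMod (p ^ l)) := by
  obtain ⟨k, hkp, hk⟩ := tor_struct' hp hl hu hu0
  obtain ⟨k', c, hkk⟩ := inv_exists hp hkp
  apply le_antisymm
  · rw [zmultiples_le, mem_zmultiples_iff]
    refine ⟨(k : ℤ), ?_⟩
    rw [hk]; push_cast [zsmul_eq_mul]; ring
  · rw [zmultiples_le, mem_zmultiples_iff]
    refine ⟨(k' : ℤ), ?_⟩
    rw [hk]
    have h2 : ((k' : ℕ) : ℤ) • ((p ^ (l - 1) * k : ℕ) : ZMod (p ^ l)) =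
        (((p ^ (l - 1) * k) * k' : ℕ) : ZMod (p ^ l)) := by push_cast [zsmul_eq_mul]; ring
    rw [h2]
    have hnat : (p ^ (l - 1) * k) * k' = p ^ l * c + p ^ (l - 1) := by
      calc (p ^ (l - 1) * k) * k' = p ^ (l - 1) * (k * k') := by ring
        _ = p ^ (l - 1) * (p * c + 1) := by rw [hkk]
        _ = (p ^ (l - 1) * p) * c + p ^ (l - 1) := by ring
        _ = p ^ l * c + p ^ (l - 1) := by rw [← pow_pred p hl]
    rw [hnat, Nat.cast_add, Nat.cast_mul, ZMod.natCast_self, zero_mul, zero_add]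

/-- the quotient of `ZMod (p^l)` by the canonical order p subgroup -/
lemma quot_cyclic (hp : p.Prime) {l : ℕ} (hl : 1 ≤ l) :
    Nonempty ((ZMod (p ^ l) ⧸ zmultiples ((p ^ (l - 1) : ℕ) : ZMod (p ^ l))) ≃+
      ZMod (p ^ (l - 1))) := by
  haveI : NeZero (p ^ l) := ⟨pow_ne_zero _ hp.pos.ne'⟩
  haveI : NeZero (p ^ (l - 1)) := ⟨pow_ne_zero _ hp.pos.ne'⟩
  have hdvd : p ^ (l - 1) ∣ p ^ l := pow_dvd_pow p (by omega)
  let f := (ZMod.castHom hdvd (ZMod (p ^ (l - 1)))).toAddMonoidHom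
  have hfval : ∀ x : ZMod (p ^ l), f x = ((x.val : ℕ) : ZMod (p ^ (l - 1))) := by
    intro x
    show (ZMod.castHom hdvd (ZMod (p ^ (l - 1)))) x = _
    rw [ZMod.castHom_apply, ← ZMod.natCast_val]
  have hsurj : Function.Surjective f := by
    intro y
    refine ⟨((y.val : ℕ) : ZMod (p ^ l)), ?_⟩
    show (ZMod.castHom hdvd (ZMod (p ^ (l - 1)))) _ = y
    rw [map_natCast, ZMod.natCast_zmod_val]
  have hker : f.ker = zmultiples ((p ^ (l - 1) : ℕ) : ZMod (p ^ l)) := by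
    ext x
    rw [AddMonoidHom.mem_ker, mem_zmultiples_iff, hfval]
    constructor
    · intro h
      obtain ⟨k, hk⟩ := (ZMod.natCast_eq_zero_iff _ _).mp h
      refine ⟨(k : ℤ), ?_⟩
      have h2 : ((k : ℕ) : ℤ) • ((p ^ (l - 1) : ℕ) : ZMod (p ^ l)) =
          ((p ^ (l - 1) * k : ℕ) : ZMod (p ^ l)) := by push_cast [zsmul_eq_mul]; ring
      rw [h2, ← hk, ZMod.natCast_zmod_val]
    · rintro ⟨k, rfl⟩
      rw [← hfval]
      have : f (k • ((p ^ (l - 1) : ℕ) : ZMod (p ^ l))) =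
          k • f ((p ^ (l - 1) : ℕ) : ZMod (p ^ l)) := map_zsmul f _ _
      rw [this, hfval]
      rw [ZMod.val_cast_of_lt ?_, ZMod.natCast_self, smul_zero]
      · calc p ^ (l - 1) < p ^ (l - 1) * p := by
              nlinarith [pow_pos hp.pos (l - 1), hp.one_lt]
          _ = p ^ l := (pow_pred p hl).symm
  exact ⟨(QuotientAddGroup.quotientAddEquivOfEq hker.symm).trans
    (QuotientAddGroup.quotientKerEquivOfSurjective f hsurj)⟩

/-- an index p subgroup isomorphic to `ZMod (p^(l-1))` -/
lemma exists_index_p (hp : p.Prime) {l : ℕ} (hl : 1 ≤ l) :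
    ∃ H : AddSubgroup (ZMod (p ^ l)), H.index = p ∧ Nonempty (ZMod (p ^ (l - 1)) ≃+ H) := by
  haveI : NeZero (p ^ l) := ⟨pow_ne_zero _ hp.pos.ne'⟩
  haveI : NeZero (p ^ (l - 1)) := ⟨pow_ne_zero _ hp.pos.ne'⟩
  have hord : (zmultiplesHom _ ((p : ℕ) : ZMod (p ^ l))) ((p ^ (l - 1) : ℕ) : ℤ) = 0 := by
    rw [zmultiplesHom_apply]
    have h1 : ((p ^ (l - 1) : ℕ) : ℤ) • ((p : ℕ) : ZMod (p ^ l)) =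
        ((p ^ (l - 1) * p : ℕ) : ZMod (p ^ l)) := by push_cast [zsmul_eq_mul]; ring
    rw [h1, ← pow_pred p hl, ZMod.natCast_self]
  let f : ZMod (p ^ (l - 1)) →+ ZMod (p ^ l) :=
    ZMod.lift _ ⟨zmultiplesHom _ ((p : ℕ) : ZMod (p ^ l)), by exact_mod_cast hord⟩
  have hfval : ∀ x : ZMod (p ^ (l - 1)), f x = ((x.val * p : ℕ) : ZMod (p ^ l)) := by
    intro x
    have hx : x = (((x.val : ℕ) : ℤ) : ZMod (p ^ (l - 1))) := by
      push_cast
      rw [ZMod.natCast_zmod_val]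
    conv_lhs => rw [hx]
    show (ZMod.lift _ _) _ = _
    rw [ZMod.lift_coe, zmultiplesHom_apply]
    push_cast [zsmul_eq_mul]; ring
  have hinj : Function.Injective f := by
    intro x y hxy
    rw [← sub_eq_zero] at hxy ⊢
    rw [← map_sub] at hxy
    set z := x - y
    have hz : ((z.val * p : ℕ) : ZMod (p ^ l)) = 0 := by rw [← hfval]; exact hxy
    have hdvd : p ^ l ∣ z.val * p := (ZMod.natCast_eq_zero_iff _ _).mp hz
    have hdvd2 : p ^ (l - 1) ∣ z.val := by
      rw [← Nat.mul_dvd_mul_iff_right hp.pos, ← pow_pred p hl]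
      exact hdvd
    have hz0 : z.val = 0 := Nat.eq_zero_of_dvd_of_lt hdvd2 (ZMod.val_lt z)
    rw [← ZMod.natCast_zmod_val z, hz0, Nat.cast_zero]
  refine ⟨f.range, ?_, ⟨AddMonoidHom.ofInjective hinj⟩⟩
  have hcardR : Nat.card f.range = p ^ (l - 1) := by
    rw [Nat.card_congr (AddMonoidHom.ofInjective hinj).toEquiv.symm, Nat.card_zmod]
  have hmul : Nat.card f.range * f.range.index = p ^ l := by
    rw [AddSubgroup.card_mul_index, Nat.card_zmod]
  rw [hcardR] at hmul
  exact Nat.eq_of_mul_eq_mul_left (pow_pos hp.pos (l - 1)) (hmul.trans (pow_pred p hl))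

end Helpers

section Plumbing

variable {A B C : Type*} [AddCommGroup A] [AddCommGroup B] [AddCommGroup C]

lemma quot_prod (S : AddSubgroup A) (T : AddSubgroup B) :
    Nonempty (((A × B) ⧸ (S.prod T)) ≃+ (A ⧸ S) × (B ⧸ T)) := by
  let f := (QuotientAddGroup.mk' S).prodMap (QuotientAddGroup.mk' T)
  have hsurj : Function.Surjective f := by
    rw [AddMonoidHom.coe_prodMap]
    exact Function.Surjective.prodMap (QuotientAddGroup.mk'_surjective S)
      (QuotientAddGroup.mk'_surjective T)
  have hker : f.ker = S.prod T := by
    ext ⟨a, b⟩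
    rw [AddMonoidHom.mem_ker, AddSubgroup.mem_prod]
    show ((QuotientAddGroup.mk' S) a, (QuotientAddGroup.mk' T) b) = 0 ↔ _
    rw [Prod.mk_eq_zero, QuotientAddGroup.mk'_apply, QuotientAddGroup.mk'_apply,
      QuotientAddGroup.eq_zero_iff, QuotientAddGroup.eq_zero_iff]
  exact ⟨(QuotientAddGroup.quotientAddEquivOfEq hker.symm).trans
    (QuotientAddGroup.quotientKerEquivOfSurjective f hsurj)⟩

lemma index_prod' (S : AddSubgroup A) (T : AddSubgroup B) :
    (S.prod T).index = S.index * T.index := by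
  obtain ⟨e⟩ := quot_prod S T
  rw [AddSubgroup.index_eq_card, AddSubgroup.index_eq_card, AddSubgroup.index_eq_card,
    Nat.card_congr e.toEquiv, Nat.card_prod]

lemma quot_prod3 (S : AddSubgroup A) (T : AddSubgroup B) (U : AddSubgroup C)
    {A' B' C' : Type*} [AddCommGroup A'] [AddCommGroup B'] [AddCommGroup C']
    (e1 : (A ⧸ S) ≃+ A') (e2 : (B ⧸ T) ≃+ B') (e3 : (C ⧸ U) ≃+ C') :
    Nonempty (((A × B × C) ⧸ (S.prod (T.prod U))) ≃+ A' × B' × C') := by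
  obtain ⟨f1⟩ := quot_prod S (T.prod U)
  obtain ⟨f2⟩ := quot_prod T U
  exact ⟨f1.trans (e1.prodCongr (f2.trans (e2.prodCongr e3)))⟩

lemma map_zmultiples' {G H : Type*} [AddGroup G] [AddGroup H] (f : G →+ H) (g : G) :
    (zmultiples g).map f = zmultiples (f g) := by
  ext y
  simp only [AddSubgroup.mem_map, mem_zmultiples_iff]
  constructor
  · rintro ⟨x, ⟨k, rfl⟩, rfl⟩
    exact ⟨k, (map_zsmul f k g).symm⟩
  · rintro ⟨k, rfl⟩
    exact ⟨k • g, ⟨k, rfl⟩, map_zsmul f k g⟩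

lemma zmult_triple1 (x : A) :
    zmultiples ((x, 0, 0) : A × B × C) =
      (zmultiples x).prod ((⊥ : AddSubgroup B).prod (⊥ : AddSubgroup C)) := by
  ext ⟨u, v, w⟩
  simp only [mem_zmultiples_iff, AddSubgroup.mem_prod, AddSubgroup.mem_bot, Prod.ext_iff,
    Prod.smul_mk, smul_zero, Prod.fst_zero, Prod.snd_zero]
  aesop

lemma zmult_triple2 (y : B) :
    zmultiples ((0, y, 0) : A × B × C) =
      (⊥ : AddSubgroup A).prod ((zmultiples y).prod (⊥ : AddSubgroup C)) := by
  ext ⟨u, v, w⟩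
  simp only [mem_zmultiples_iff, AddSubgroup.mem_prod, AddSubgroup.mem_bot, Prod.ext_iff,
    Prod.smul_mk, smul_zero, Prod.fst_zero, Prod.snd_zero]
  aesop

lemma zmult_triple3 (z : C) :
    zmultiples ((0, 0, z) : A × B × C) =
      (⊥ : AddSubgroup A).prod ((⊥ : AddSubgroup B).prod (zmultiples z)) := by
  ext ⟨u, v, w⟩
  simp only [mem_zmultiples_iff, AddSubgroup.mem_prod, AddSubgroup.mem_bot, Prod.ext_iff,
    Prod.smul_mk, smul_zero, Prod.fst_zero, Prod.snd_zero]
  aesop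

lemma gen_of_card_prime {p : ℕ} (hp : p.Prime) {G : Type*} [AddCommGroup G]
    (N : AddSubgroup G) (hN : Nat.card N = p) :
    ∃ n : G, n ∈ N ∧ n ≠ 0 ∧ N = zmultiples n := by
  haveI : Finite N := (Nat.card_pos_iff.mp (by rw [hN]; exact hp.pos)).2
  have hne : N ≠ ⊥ := by
    intro h
    rw [h, AddSubgroup.card_bot] at hN
    exact hp.one_lt.ne hN
  obtain ⟨n, hnN, hn0⟩ : ∃ n ∈ N, n ≠ 0 := by
    by_contra h
    push_neg at h
    exact hne (AddSubgroup.eq_bot_iff_forall N |>.mpr h)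
  refine ⟨n, hnN, hn0, ?_⟩
  have hord : addOrderOf n = p := by
    have hdvd : addOrderOf n ∣ p := hN ▸ AddSubgroup.addOrderOf_dvd_natCard N hnN
    rcases (Nat.Prime.eq_one_or_self_of_dvd hp _ hdvd).symm.imp id id with h | h
    · exact h
    · exact absurd (AddMonoid.addOrderOf_eq_one_iff.mp h) hn0
  have hle : zmultiples n ≤ N := zmultiples_le.mpr hnN
  have hcard : Nat.card N ≤ Nat.card (zmultiples n) := by
    rw [Nat.card_zmultiples, hord, hN]
  exact (AddSubgroup.eq_of_le_of_card_ge hle hcard).symm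

end Plumbing

set_option maxHeartbeats 1600000 in
theorem quotient_by_order_p_subgroup (p l1 l2 l3 : ℕ) (hp : p.Prime)
    (h12 : l2 < l1) (h23 : l3 < l2) (h3 : 1 ≤ l3)
    (N : AddSubgroup (ZMod (p ^ l1) × ZMod (p ^ l2) × ZMod (p ^ l3)))
    (hNM : N ≤ pTorsion p (ZMod (p ^ l1) × ZMod (p ^ l2) × ZMod (p ^ l3)))
    (hN : Nat.card N = p) :
    (∃ H : AddSubgroup (ZMod (p ^ l1) × ZMod (p ^ l2) × ZMod (p ^ l3)),
        H.index = p ∧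
        Nonempty (((ZMod (p ^ l1) × ZMod (p ^ l2) × ZMod (p ^ l3)) ⧸ N) ≃+ H)) ∧
    (Nonempty (((ZMod (p ^ l1) × ZMod (p ^ l2) × ZMod (p ^ l3)) ⧸ N) ≃+
        (ZMod (p ^ (l1 - 1)) × ZMod (p ^ l2) × ZMod (p ^ l3))) ∨
     Nonempty (((ZMod (p ^ l1) × ZMod (p ^ l2) × ZMod (p ^ l3)) ⧸ N) ≃+
        (ZMod (p ^ l1) × ZMod (p ^ (l2 - 1)) × ZMod (p ^ l3))) ∨
     Nonempty (((ZMod (p ^ l1) × ZMod (p ^ l2) × ZMod (p ^ l3)) ⧸ N) ≃+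
        (ZMod (p ^ l1) × ZMod (p ^ l2) × ZMod (p ^ (l3 - 1))))) := by
  have h1 : 1 ≤ l1 := by omega
  have h2 : 1 ≤ l2 := by omega
  obtain ⟨n, hnN, hn0, hNgen⟩ := gen_of_card_prime hp N hN
  obtain ⟨a, b, c⟩ := n
  have htor : p • ((a, b, c) : ZMod (p ^ l1) × ZMod (p ^ l2) × ZMod (p ^ l3)) = 0 := hNM hnN
  have hta : p • a = 0 := by
    have h := map_nsmul (AddMonoidHom.fst (ZMod (p ^ l1)) (ZMod (p ^ l2) × ZMod (p ^ l3)))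
      p (a, b, c)
    rw [htor, map_zero] at h
    exact h.symm
  have htbc : p • ((b, c) : ZMod (p ^ l2) × ZMod (p ^ l3)) = 0 := by
    have h := map_nsmul (AddMonoidHom.snd (ZMod (p ^ l1)) (ZMod (p ^ l2) × ZMod (p ^ l3)))
      p (a, b, c)
    rw [htor, map_zero] at h
    exact h.symm
  have htb : p • b = 0 := by
    have h := map_nsmul (AddMonoidHom.fst (ZMod (p ^ l2)) (ZMod (p ^ l3))) p (b, c)
    rw [htbc, map_zero] at h
    exact h.symm
  have htc : p • c = 0 := by
    have h := map_nsmul (AddMonoidHom.snd (ZMod (p ^ l2)) (ZMod (p ^ l3))) p (b, c)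
    rw [htbc, map_zero] at h
    exact h.symm
  by_cases hc : c = 0
  · by_cases hb : b = 0
    · -- case 1: reduce l1
      subst hb; subst hc
      have ha0 : a ≠ 0 := fun h => hn0 (by rw [h]; rfl)
      have hNeq : N = (zmultiples ((p ^ (l1 - 1) : ℕ) : ZMod (p ^ l1))).prod
          ((⊥ : AddSubgroup (ZMod (p ^ l2))).prod (⊥ : AddSubgroup (ZMod (p ^ l3)))) := by
        rw [hNgen, zmult_triple1, zmult_eq hp h1 hta ha0]
      obtain ⟨eq1⟩ := quot_cyclic hp h1
      obtain ⟨E⟩ := quot_prod3 _ _ _ eq1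
        (QuotientAddGroup.quotientBot (G := ZMod (p ^ l2)))
        (QuotientAddGroup.quotientBot (G := ZMod (p ^ l3)))
      have key : Nonempty (((ZMod (p ^ l1) × ZMod (p ^ l2) × ZMod (p ^ l3)) ⧸ N) ≃+
          (ZMod (p ^ (l1 - 1)) × ZMod (p ^ l2) × ZMod (p ^ l3))) :=
        ⟨(QuotientAddGroup.quotientAddEquivOfEq hNeq).trans E⟩
      have E0 := Classical.choice key
      obtain ⟨Hs, hHsi, ⟨es⟩⟩ := exists_index_p hp h1
      refine ⟨⟨Hs.prod (⊤ : AddSubgroup (ZMod (p ^ l2) × ZMod (p ^ l3))), ?_, ?_⟩, Or.inl key⟩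
      · simp [index_prod', hHsi, AddSubgroup.index_top]
      · exact ⟨E0.trans ((es.prodCongr AddSubgroup.topEquiv.symm).trans
          (AddSubgroup.prodEquiv _ _).symm)⟩
    · -- case 2: reduce l2
      subst hc
      obtain ⟨ψ, hψ⟩ := exists_hom hp h2 h12.le htb hb hta
      let e : (ZMod (p ^ l1) × ZMod (p ^ l2) × ZMod (p ^ l3)) ≃+
          (ZMod (p ^ l1) × ZMod (p ^ l2) × ZMod (p ^ l3)) :=
        { toFun := fun x => (x.1 - ψ x.2.1, x.2.1, x.2.2)
          invFun := fun x => (x.1 + ψ x.2.1, x.2.1, x.2.2)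
          left_inv := fun x => by simp
          right_inv := fun x => by simp
          map_add' := fun x y => by
            simp only [Prod.fst_add, Prod.snd_add, map_add, Prod.mk_add_mk,
              sub_add_sub_comm] }
      have he : e (a, b, 0) = ((0 : ZMod (p ^ l1)), b, (0 : ZMod (p ^ l3))) := by
        show (a - ψ b, b, (0 : ZMod (p ^ l3))) = _
        rw [hψ, sub_self]
      have hmap : N.map (e : (ZMod (p ^ l1) × ZMod (p ^ l2) × ZMod (p ^ l3)) →+
          (ZMod (p ^ l1) × ZMod (p ^ l2) × ZMod (p ^ l3))) = (⊥ : AddSubgroup (ZMod (p ^ l1))).prod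
          ((zmultiples ((p ^ (l2 - 1) : ℕ) : ZMod (p ^ l2))).prod
            (⊥ : AddSubgroup (ZMod (p ^ l3)))) := by
        rw [hNgen, map_zmultiples']
        simp only [AddMonoidHom.coe_coe]
        rw [he, zmult_triple2, zmult_eq hp h2 htb hb]
      obtain ⟨eq2⟩ := quot_cyclic hp h2
      obtain ⟨E⟩ := quot_prod3 _ _ _
        (QuotientAddGroup.quotientBot (G := ZMod (p ^ l1))) eq2
        (QuotientAddGroup.quotientBot (G := ZMod (p ^ l3)))
      have key : Nonempty (((ZMod (p ^ l1) × ZMod (p ^ l2) × ZMod (p ^ l3)) ⧸ N) ≃+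
          (ZMod (p ^ l1) × ZMod (p ^ (l2 - 1)) × ZMod (p ^ l3))) :=
        ⟨(QuotientAddGroup.congr N _ e hmap).trans E⟩
      have E0 := Classical.choice key
      obtain ⟨Hs, hHsi, ⟨es⟩⟩ := exists_index_p hp h2
      refine ⟨⟨(⊤ : AddSubgroup (ZMod (p ^ l1))).prod
        (Hs.prod (⊤ : AddSubgroup (ZMod (p ^ l3)))), ?_, ?_⟩, Or.inr (Or.inl key)⟩
      · simp [index_prod', hHsi, AddSubgroup.index_top]
      · exact ⟨E0.trans ((AddSubgroup.topEquiv.symm.prodCongr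
          ((es.prodCongr AddSubgroup.topEquiv.symm).trans
            (AddSubgroup.prodEquiv _ _).symm)).trans (AddSubgroup.prodEquiv _ _).symm)⟩
  · -- case 3: reduce l3
    obtain ⟨ψ1, hψ1⟩ := exists_hom hp h3 (by omega : l3 ≤ l1) htc hc hta
    obtain ⟨ψ2, hψ2⟩ := exists_hom hp h3 h23.le htc hc htb
    let e : (ZMod (p ^ l1) × ZMod (p ^ l2) × ZMod (p ^ l3)) ≃+
        (ZMod (p ^ l1) × ZMod (p ^ l2) × ZMod (p ^ l3)) :=
      { toFun := fun x => (x.1 - ψ1 x.2.2, x.2.1 - ψ2 x.2.2, x.2.2)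
        invFun := fun x => (x.1 + ψ1 x.2.2, x.2.1 + ψ2 x.2.2, x.2.2)
        left_inv := fun x => by simp
        right_inv := fun x => by simp
        map_add' := fun x y => by
          simp only [Prod.fst_add, Prod.snd_add, map_add, Prod.mk_add_mk,
            sub_add_sub_comm] }
    have he : e (a, b, c) = ((0 : ZMod (p ^ l1)), (0 : ZMod (p ^ l2)), c) := by
      show (a - ψ1 c, b - ψ2 c, c) = _
      rw [hψ1, hψ2, sub_self, sub_self]
    have hmap : N.map (e : (ZMod (p ^ l1) × ZMod (p ^ l2) × ZMod (p ^ l3)) →+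
        (ZMod (p ^ l1) × ZMod (p ^ l2) × ZMod (p ^ l3))) = (⊥ : AddSubgroup (ZMod (p ^ l1))).prod
        ((⊥ : AddSubgroup (ZMod (p ^ l2))).prod
          (zmultiples ((p ^ (l3 - 1) : ℕ) : ZMod (p ^ l3)))) := by
      rw [hNgen, map_zmultiples']
      simp only [AddMonoidHom.coe_coe]
      rw [he, zmult_triple3, zmult_eq hp h3 htc hc]
    obtain ⟨eq3⟩ := quot_cyclic hp h3
    obtain ⟨E⟩ := quot_prod3 _ _ _
      (QuotientAddGroup.quotientBot (G := ZMod (p ^ l1)))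
      (QuotientAddGroup.quotientBot (G := ZMod (p ^ l2))) eq3
    have key : Nonempty (((ZMod (p ^ l1) × ZMod (p ^ l2) × ZMod (p ^ l3)) ⧸ N) ≃+
        (ZMod (p ^ l1) × ZMod (p ^ l2) × ZMod (p ^ (l3 - 1)))) :=
      ⟨(QuotientAddGroup.congr N _ e hmap).trans E⟩
    have E0 := Classical.choice key
    obtain ⟨Hs, hHsi, ⟨es⟩⟩ := exists_index_p hp h3
    refine ⟨⟨(⊤ : AddSubgroup (ZMod (p ^ l1))).prod
      ((⊤ : AddSubgroup (ZMod (p ^ l2))).prod Hs), ?_, ?_⟩, Or.inr (Or.inr key)⟩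
    · simp [index_prod', hHsi, AddSubgroup.index_top]
    · exact ⟨E0.trans ((AddSubgroup.topEquiv.symm.prodCongr
        ((AddSubgroup.topEquiv.symm.prodCongr es).trans
          (AddSubgroup.prodEquiv _ _).symm)).trans (AddSubgroup.prodEquiv _ _).symm)⟩
end

section
/- Let G be a finite abelian p-group and H a subgroup of G with μ(H,G) ≠ 0 (Möbius function of the subgroup lattice of G). Then the quotient G/H is elementary abelian; equivalently, H contains the Frattini subgroup pG. -/
open scoped Classical

/-- `μ` is the Möbius function `H ↦ μ(H, G)` of the subgroup lattice of an additive
group `G`: it is characterized by `∑_{H ≤ L ≤ G} μ(L, G) = δ_{H,G}`. -/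
def IsAddMobius {G : Type*} [AddGroup G] [Fintype G] (μ : AddSubgroup G → ℤ) : Prop :=
  ∀ H : AddSubgroup G,
    ∑ L ∈ Finset.univ.filter (fun L : AddSubgroup G => H ≤ L), μ L =
      if H = (⊤ : AddSubgroup G) then 1 else 0

/-- The subgroup `pG` of a commutative additive group. -/
def pMulSub (p : ℕ) (G : Type*) [AddCommGroup G] : AddSubgroup G where
  carrier := Set.range (fun g : G => p • g)
  zero_mem' := ⟨0, smul_zero p⟩
  add_mem' := by
    rintro _ _ ⟨a, rfl⟩ ⟨b, rfl⟩
    exact ⟨a + b, smul_add p a b⟩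
  neg_mem' := by
    rintro _ ⟨a, rfl⟩
    exact ⟨-a, smul_neg p a⟩

lemma frattini_arg {G : Type*} [AddCommGroup G] [Fintype G] (p n : ℕ)
    (hcard : Nat.card G = p ^ n) (H : AddSubgroup G)
    (hsup : H ⊔ pMulSub p G = ⊤) : H = ⊤ := by
  -- every element of the quotient is `p • something`
  have hsurj : ∀ q : G ⧸ H, ∃ r : G ⧸ H, p • r = q := by
    intro q
    obtain ⟨x, rfl⟩ := QuotientAddGroup.mk'_surjective H q
    have hx : x ∈ H ⊔ pMulSub p G := hsup ▸ AddSubgroup.mem_top x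
    rw [AddSubgroup.mem_sup] at hx
    obtain ⟨a, ha, b, ⟨y, rfl⟩, hab⟩ := hx
    refine ⟨QuotientAddGroup.mk' H y, ?_⟩
    rw [← map_nsmul, ← hab, map_add]
    simp [(QuotientAddGroup.eq_zero_iff a).2 ha]
  have hsurj' : ∀ k : ℕ, ∀ q : G ⧸ H, ∃ r : G ⧸ H, p ^ k • r = q := by
    intro k
    induction k with
    | zero => intro q; exact ⟨q, by simp⟩
    | succ k ih =>
      intro q
      obtain ⟨r, hr⟩ := hsurj q
      obtain ⟨s, hs⟩ := ih r
      exact ⟨s, by rw [pow_succ, mul_comm, mul_smul, hs, hr]⟩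
  -- every element of the quotient is killed by `p ^ n`
  have hkill : ∀ q : G ⧸ H, p ^ n • q = 0 := by
    intro q
    have hdvd : Nat.card (G ⧸ H) ∣ p ^ n := by
      rw [← hcard, AddSubgroup.card_eq_card_quotient_mul_card_addSubgroup H]
      exact Dvd.intro _ rfl
    have : addOrderOf q ∣ p ^ n := (addOrderOf_dvd_natCard q).trans hdvd
    exact addOrderOf_dvd_iff_nsmul_eq_zero.mp this
  have hq : ∀ q : G ⧸ H, q = 0 := by
    intro q
    obtain ⟨r, hr⟩ := hsurj' n q
    rw [← hr, hkill r]
  ext g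
  simp only [AddSubgroup.mem_top, iff_true]
  exact (QuotientAddGroup.eq_zero_iff g).1 (hq _)

lemma mobius_zero_of_not_le {G : Type*} [AddCommGroup G] [Fintype G] (p n : ℕ)
    (hcard : Nat.card G = p ^ n) (μ : AddSubgroup G → ℤ) (hμ : IsAddMobius μ) :
    ∀ k : ℕ, ∀ H : AddSubgroup G,
      (Finset.univ.filter (fun L : AddSubgroup G => H ≤ L)).card ≤ k →
      ¬ pMulSub p G ≤ H → μ H = 0 := by
  intro k
  induction k with
  | zero =>
    intro H hcardk _
    exact absurd hcardk (by
      simp only [not_le, Finset.card_pos]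
      exact ⟨H, by simp⟩)
  | succ k ih =>
    intro H hcardk hH
    have hHne : H ≠ ⊤ := fun h => hH (h ▸ le_top)
    have hμH := hμ H
    rw [if_neg hHne] at hμH
    -- split off H from the sum
    have hins : Finset.univ.filter (fun L : AddSubgroup G => H ≤ L)
        = insert H (Finset.univ.filter (fun L : AddSubgroup G => H < L)) := by
      ext L
      simp only [Finset.mem_filter, Finset.mem_univ, true_and, Finset.mem_insert]
      constructor
      · intro hl
        rcases eq_or_lt_of_le hl with h | h
        · exact Or.inl h.symm
        · exact Or.inr h
      · rintro (rfl | h)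
        · exact le_rfl
        · exact le_of_lt h
    have hnotmem : H ∉ Finset.univ.filter (fun L : AddSubgroup G => H < L) := by
      simp
    rw [hins, Finset.sum_insert hnotmem] at hμH
    -- the sum over L > H equals the sum over L ≥ H ⊔ pG
    have hsub : Finset.univ.filter (fun L : AddSubgroup G => H ⊔ pMulSub p G ≤ L)
        ⊆ Finset.univ.filter (fun L : AddSubgroup G => H < L) := by
      intro L hL
      simp only [Finset.mem_filter, Finset.mem_univ, true_and] at hL ⊢
      refine lt_of_le_of_ne (le_trans le_sup_left hL) ?_
      rintro rfl
      exact hH (le_trans le_sup_right hL)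
    have hvanish : ∀ L ∈ Finset.univ.filter (fun L : AddSubgroup G => H < L),
        L ∉ Finset.univ.filter (fun L : AddSubgroup G => H ⊔ pMulSub p G ≤ L) → μ L = 0 := by
      intro L hL hL'
      simp only [Finset.mem_filter, Finset.mem_univ, true_and] at hL hL'
      have hNL : ¬ pMulSub p G ≤ L := fun hle => hL' (sup_le hL.le hle)
      have hssub : Finset.univ.filter (fun M : AddSubgroup G => L ≤ M)
          ⊂ Finset.univ.filter (fun M : AddSubgroup G => H ≤ M) := by
        refine Finset.ssubset_iff_of_subset ?_ |>.2 ?_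
        · intro M hM
          simp only [Finset.mem_filter, Finset.mem_univ, true_and] at hM ⊢
          exact le_trans hL.le hM
        · refine ⟨H, by simp, ?_⟩
          simp only [Finset.mem_filter, Finset.mem_univ, true_and]
          exact fun hle => absurd (le_antisymm hL.le hle ▸ hL) (lt_irrefl H)
      have : (Finset.univ.filter (fun M : AddSubgroup G => L ≤ M)).card ≤ k := by
        have := Finset.card_lt_card hssub
        omega
      exact ih L this hNL
    have hsum : ∑ L ∈ Finset.univ.filter (fun L : AddSubgroup G => H ⊔ pMulSub p G ≤ L), μ L
        = ∑ L ∈ Finset.univ.filter (fun L : AddSubgroup G => H < L), μ L :=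
      Finset.sum_subset hsub hvanish
    have htop : H ⊔ pMulSub p G ≠ ⊤ := fun h => hHne (frattini_arg p n hcard H h)
    have hμsup := hμ (H ⊔ pMulSub p G)
    rw [if_neg htop] at hμsup
    rw [← hsum, hμsup, add_zero] at hμH
    exact hμH

theorem quotient_elementaryAbelian_of_mobius_ne_zero (p : ℕ) (hp : p.Prime)
    (G : Type*) [AddCommGroup G] [Fintype G] (hpG : ∃ n : ℕ, Nat.card G = p ^ n)
    (H : AddSubgroup G) (μ : AddSubgroup G → ℤ) (hμ : IsAddMobius μ) (h : μ H ≠ 0) :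
    (∀ g : G ⧸ H, p • g = 0) ∧ (∀ g : G, p • g ∈ H) := by
  obtain ⟨n, hcard⟩ := hpG
  have hle : pMulSub p G ≤ H := by
    by_contra hnle
    exact h (mobius_zero_of_not_le p n hcard μ hμ
      (Finset.univ.filter (fun L : AddSubgroup G => H ≤ L)).card H le_rfl hnle)
  have hmem : ∀ g : G, p • g ∈ H := fun g => hle ⟨g, rfl⟩
  refine ⟨?_, hmem⟩
  intro g
  obtain ⟨x, rfl⟩ := QuotientAddGroup.mk'_surjective H g
  rw [← map_nsmul]
  exact (QuotientAddGroup.eq_zero_iff _).2 (hmem x)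
end
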